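/- arXiv:1910.12742 — 9 statements merged into one kernel-verified Lean document; each statement's English description precedes it below -/
import Mathlib

section
/- Let m > 0. Then the limit as t → ∞ of (∫_0^∞ (u² + t²)^{-1/4} e^{-m√(u²+t²)} du) / e^{-mt} exists and equals √(π/(2m)). -/
open MeasureTheory Filter Real Set

private noncomputable def Gfun (m t v : ℝ) : ℝ :=
  (v ^ 2 / t + 1) ^ (-(1/4) : ℝ) * exp (-m * (v ^ 2 / (sqrt (v ^ 2 / t + 1) + 1)))

private lemma one_le_sqrt_aux {x : ℝ} (hx : 0 ≤ x) : 1 ≤ Real.sqrt (x + 1) := by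
  have := Real.sqrt_le_sqrt (show (1:ℝ) ≤ x + 1 by linarith)
  simpa using this

private lemma integrand_eq (m t v : ℝ) (ht : 0 < t) (hv : 0 < v) :
    sqrt t * (((sqrt t * v) ^ 2 + t ^ 2) ^ (-(1/4) : ℝ)
        * exp (-m * sqrt ((sqrt t * v) ^ 2 + t ^ 2))) / exp (-m * t)
      = Gfun m t v := by
  have hstv : (sqrt t * v) ^ 2 = t * v ^ 2 := by
    rw [mul_pow, Real.sq_sqrt ht.le]
  have hbase : (sqrt t * v) ^ 2 + t ^ 2 = t ^ 2 * (v ^ 2 / t + 1) := by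
    rw [hstv]; field_simp
  have ha : (0:ℝ) ≤ v ^ 2 / t + 1 := by positivity
  have hsq : sqrt ((sqrt t * v) ^ 2 + t ^ 2) = t * sqrt (v ^ 2 / t + 1) := by
    rw [hbase, Real.sqrt_mul (sq_nonneg t), Real.sqrt_sq ht.le]
  have hrpow : ((sqrt t * v) ^ 2 + t ^ 2) ^ (-(1/4) : ℝ)
      = (t ^ 2) ^ (-(1/4) : ℝ) * (v ^ 2 / t + 1) ^ (-(1/4) : ℝ) := by
    rw [hbase, Real.mul_rpow (sq_nonneg t) ha]
  have ht2 : (t ^ 2 : ℝ) ^ (-(1/4) : ℝ) = (sqrt t)⁻¹ := by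
    rw [← Real.rpow_natCast t 2, ← Real.rpow_mul ht.le, Real.sqrt_eq_rpow,
      ← Real.rpow_neg ht.le]
    norm_num
  have hs1 : (1:ℝ) ≤ sqrt (v ^ 2 / t + 1) := one_le_sqrt_aux (by positivity)
  have hexp : t * (sqrt (v ^ 2 / t + 1) - 1) = v ^ 2 / (sqrt (v ^ 2 / t + 1) + 1) := by
    have h := Real.mul_self_sqrt ha
    have htv : v ^ 2 / t * t = v ^ 2 := div_mul_cancel₀ _ ht.ne'
    rw [eq_div_iff (by positivity : sqrt (v ^ 2 / t + 1) + 1 ≠ 0)]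
    linear_combination t * h + htv
  rw [hrpow, ht2, hsq]
  rw [div_eq_iff (Real.exp_ne_zero _)]
  unfold Gfun
  have hE2 : -m * (t * sqrt (v ^ 2 / t + 1))
      = (-m * (v ^ 2 / (sqrt (v ^ 2 / t + 1) + 1))) + (-m * t) := by
    rw [← hexp]; ring
  rw [hE2, Real.exp_add]
  have hst0 : sqrt t ≠ 0 := by positivity
  field_simp

/-- Lemma B (first limit): for `m > 0`,
`(∫_0^∞ (u² + t²)^{-1/4} e^{-m√(u²+t²)} du) / e^{-mt} → √(π/(2m))` as `t → ∞`. -/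
theorem stmt0 (m : ℝ) (hm : 0 < m) :
    Tendsto (fun t : ℝ =>
        (∫ u in Ioi (0:ℝ), (u ^ 2 + t ^ 2) ^ (-(1/4) : ℝ) * exp (-m * sqrt (u ^ 2 + t ^ 2))) /
          exp (-m * t))
      atTop (nhds (sqrt (π / (2 * m)))) := by
  have hval : sqrt (π / (2 * m)) = ∫ v in Ioi (0:ℝ), exp (-(m/2) * v ^ 2) := by
    rw [integral_gaussian_Ioi]
    have h4 : π / (m/2) = 2^2 * (π/(2*m)) := by field_simp
    rw [h4, Real.sqrt_mul (by positivity) , Real.sqrt_sq (by norm_num : (0:ℝ) ≤ 2)]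
    ring
  rw [hval]
  have hmain : Tendsto (fun t : ℝ => ∫ v in Ioi (0:ℝ), Gfun m t v) atTop
      (nhds (∫ v in Ioi (0:ℝ), exp (-(m/2) * v ^ 2))) := by
    apply tendsto_integral_filter_of_dominated_convergence
      (fun v => exp m * exp (-(m/2) * v))
    · -- measurability
      filter_upwards [eventually_gt_atTop (0:ℝ)] with t ht
      apply Continuous.aestronglyMeasurable
      apply Continuous.mul
      · apply Continuous.rpow_const
        · continuity
        · intro x; left; exact ne_of_gt (by positivity)
      · apply Real.continuous_exp.comp
        apply Continuous.mul continuous_const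
        apply Continuous.div (by continuity)
        · exact ((Real.continuous_sqrt.comp (by continuity)).add continuous_const)
        · intro x; exact ne_of_gt (by positivity)
    · -- bound
      filter_upwards [eventually_ge_atTop (1:ℝ)] with t ht
      rw [ae_restrict_iff' measurableSet_Ioi]
      filter_upwards with v hv
      have hv' : (0:ℝ) < v := hv
      have ht0 : (0:ℝ) < t := lt_of_lt_of_le one_pos ht
      have ha : (1:ℝ) ≤ v ^ 2 / t + 1 := by
        have : (0:ℝ) ≤ v ^ 2 / t := by positivity
        linarith
      have hG : (0:ℝ) ≤ Gfun m t v := by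
        unfold Gfun; positivity
      rw [Real.norm_eq_abs, abs_of_nonneg hG]
      unfold Gfun
      have h1 : (v ^ 2 / t + 1) ^ (-(1/4) : ℝ) ≤ 1 :=
        Real.rpow_le_one_of_one_le_of_nonpos ha (by norm_num)
      have hsle : sqrt (v ^ 2 / t + 1) ≤ v + 1 := by
        rw [show v + 1 = sqrt ((v+1)^2) from (Real.sqrt_sq (by positivity)).symm]
        apply Real.sqrt_le_sqrt
        have : v ^ 2 / t ≤ v ^ 2 := by
          rw [div_le_iff₀ ht0]; nlinarith [sq_nonneg v]
        nlinarith
      have hs1 : (1:ℝ) ≤ sqrt (v ^ 2 / t + 1) := one_le_sqrt_aux (by positivity)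
      have hE : v / 2 - 1 ≤ v ^ 2 / (sqrt (v ^ 2 / t + 1) + 1) := by
        rw [le_div_iff₀ (by positivity)]
        nlinarith [hs1, hsle, sq_nonneg v, sq_nonneg (v - 2)]
      have h2 : exp (-m * (v ^ 2 / (sqrt (v ^ 2 / t + 1) + 1)))
          ≤ exp m * exp (-(m/2) * v) := by
        rw [← Real.exp_add]
        apply Real.exp_le_exp.mpr
        nlinarith [hE]
      calc (v ^ 2 / t + 1) ^ (-(1/4) : ℝ) * exp (-m * (v ^ 2 / (sqrt (v ^ 2 / t + 1) + 1)))
          ≤ 1 * exp (-m * (v ^ 2 / (sqrt (v ^ 2 / t + 1) + 1))) := by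
            apply mul_le_mul_of_nonneg_right h1 (Real.exp_nonneg _)
        _ ≤ exp m * exp (-(m/2) * v) := by rw [one_mul]; exact h2
    · -- integrability of the bound
      exact (exp_neg_integrableOn_Ioi 0 (by positivity : (0:ℝ) < m/2)).const_mul _
    · -- pointwise limit
      rw [ae_restrict_iff' measurableSet_Ioi]
      filter_upwards with v hv
      have h0 : Tendsto (fun t : ℝ => v ^ 2 / t + 1) atTop (nhds 1) := by
        have := Tendsto.div_atTop
          (tendsto_const_nhds : Tendsto (fun _ : ℝ => v ^ 2) atTop (nhds (v^2))) tendsto_id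
        simpa using this.add_const 1
      have h1 : Tendsto (fun t : ℝ => (v ^ 2 / t + 1) ^ (-(1/4) : ℝ)) atTop (nhds 1) := by
        have hc : ContinuousAt (fun x : ℝ => x ^ (-(1/4):ℝ)) 1 :=
          Real.continuousAt_rpow_const 1 _ (Or.inl one_ne_zero)
        have := hc.tendsto.comp h0
        simpa [Function.comp_def] using this
      have h2 : Tendsto (fun t : ℝ => exp (-m * (v ^ 2 / (sqrt (v ^ 2 / t + 1) + 1))))
          atTop (nhds (exp (-(m/2) * v ^ 2))) := by
        have hs : Tendsto (fun t : ℝ => sqrt (v ^ 2 / t + 1)) atTop (nhds 1) := by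
          have := (Real.continuous_sqrt.tendsto 1).comp h0
          simpa [Function.comp_def] using this
        have hd : Tendsto (fun t : ℝ => v ^ 2 / (sqrt (v ^ 2 / t + 1) + 1)) atTop
            (nhds (v ^ 2 / 2)) := by
          have h2' : Tendsto (fun t : ℝ => v ^ 2 / (sqrt (v ^ 2 / t + 1) + 1)) atTop
              (nhds (v ^ 2 / (1 + 1))) :=
            tendsto_const_nhds.div (hs.add_const 1) (by norm_num)
          simpa [one_add_one_eq_two] using h2'
        have := (Real.continuous_exp.tendsto _).comp (hd.const_mul (-m))
        simp only [Function.comp_def] at this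
        convert this using 2
        ring
      unfold Gfun
      simpa using h1.mul h2
  apply hmain.congr'
  filter_upwards [eventually_gt_atTop (0:ℝ)] with t ht
  have hst : (0:ℝ) < sqrt t := Real.sqrt_pos.mpr ht
  have hcv := integral_comp_mul_left_Ioi
    (fun u => (u ^ 2 + t ^ 2) ^ (-(1/4) : ℝ) * exp (-m * sqrt (u ^ 2 + t ^ 2)))
    0 hst
  rw [mul_zero] at hcv
  rw [show (∫ u in Ioi (0:ℝ), (u ^ 2 + t ^ 2) ^ (-(1/4) : ℝ) * exp (-m * sqrt (u ^ 2 + t ^ 2)))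
      = sqrt t • ∫ v in Ioi (0:ℝ),
        ((sqrt t * v) ^ 2 + t ^ 2) ^ (-(1/4) : ℝ) * exp (-m * sqrt ((sqrt t * v) ^ 2 + t ^ 2)) by
    rw [hcv, smul_smul, mul_inv_cancel₀ hst.ne', one_smul]]
  rw [smul_eq_mul, ← integral_const_mul, ← integral_div]
  apply setIntegral_congr_fun measurableSet_Ioi
  intro v hv
  exact (integrand_eq m t v ht hv).symm
end

section
/- Let m > 0 and let α, β be real numbers with 0 < β < 1/2 < α < 3/4. Then the limit as t → ∞ of (∫_{t^β}^{t^α} e^{-m√(u²+t²)} du) / (t^{1/2} e^{-mt}) exists and equals √(π/(2m)). -/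
open MeasureTheory Filter Real Set intervalIntegral

/-- Lemma B (second limit): for `m > 0` and `0 < β < 1/2 < α < 3/4`,
`(∫_{t^β}^{t^α} e^{-m√(u²+t²)} du) / (t^{1/2} e^{-mt}) → √(π/(2m))` as `t → ∞`. -/
theorem stmt1 (m α β : ℝ) (hm : 0 < m) (hβ : 0 < β) (hβhalf : β < 1/2)
    (hhalfα : 1/2 < α) (hα : α < 3/4) :
    Tendsto (fun t : ℝ =>
        (∫ u in (t ^ β)..(t ^ α), exp (-m * sqrt (u ^ 2 + t ^ 2))) /
          (t ^ ((1:ℝ)/2) * exp (-m * t)))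
      atTop (nhds (sqrt (π / (2 * m)))) := by
  have hm' : m ≠ 0 := hm.ne'
  set F : ℝ → ℝ → ℝ := fun t v =>
    (Ioc (t ^ (β - 1/2)) (t ^ (α - 1/2))).indicator
      (fun v => exp (-(m * (sqrt (t * v ^ 2 + t ^ 2) - t)))) v with hFdef
  have key : Tendsto (fun t : ℝ => ∫ v : ℝ, F t v) atTop
      (nhds (∫ v : ℝ, (Ioi (0:ℝ)).indicator (fun v => exp (-(m/2) * v ^ 2)) v)) := by
    apply MeasureTheory.tendsto_integral_filter_of_dominated_convergence
        (fun v : ℝ => exp (-(m/3) * v ^ 2))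
    · filter_upwards with t
      exact ((Real.continuous_exp.comp (by fun_prop)).aestronglyMeasurable).indicator
        measurableSet_Ioc
    · filter_upwards [eventually_ge_atTop (1:ℝ)] with t ht
      have ht0 : (0:ℝ) < t := lt_of_lt_of_le one_pos ht
      filter_upwards with v
      rw [Real.norm_eq_abs, abs_of_nonneg (Set.indicator_nonneg (fun _ _ => (exp_pos _).le) _)]
      by_cases hv : v ∈ Ioc (t ^ (β - 1/2)) (t ^ (α - 1/2))
      · rw [Set.indicator_of_mem hv]
        apply exp_le_exp.2
        have h0 : 0 < v := lt_trans (rpow_pos_of_pos ht0 _) hv.1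
        have hv2 : v ^ 2 ≤ t := by
          have h1 : v ≤ t ^ (α - 1/2) := hv.2
          have h2 : v ^ 2 ≤ (t ^ (α - 1/2)) ^ 2 := by nlinarith
          have h3 : (t ^ (α - 1/2)) ^ 2 = t ^ ((α - 1/2) * 2) := by
            rw [← Real.rpow_natCast (t ^ (α - 1/2)) 2, ← Real.rpow_mul ht0.le]
            norm_num
          have h4 : t ^ ((α - 1/2) * 2) ≤ t ^ (1:ℝ) :=
            rpow_le_rpow_of_exponent_le ht (by linarith)
          rw [Real.rpow_one] at h4
          calc v ^ 2 ≤ (t ^ (α - 1/2)) ^ 2 := h2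
            _ = t ^ ((α - 1/2) * 2) := h3
            _ ≤ t := h4
        have hX : (0:ℝ) ≤ t * v ^ 2 + t ^ 2 := by positivity
        have hsq : sqrt (t * v ^ 2 + t ^ 2) ^ 2 = t * v ^ 2 + t ^ 2 := Real.sq_sqrt hX
        have hs : sqrt (t * v ^ 2 + t ^ 2) ≤ 2 * t := by
          nlinarith [Real.sqrt_nonneg (t * v ^ 2 + t ^ 2), ht0]
        have hkey : v ^ 2 / 3 ≤ sqrt (t * v ^ 2 + t ^ 2) - t := by
          nlinarith [Real.sqrt_nonneg (t * v ^ 2 + t ^ 2), ht0]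
        nlinarith [hkey, hm]
      · rw [Set.indicator_of_notMem hv]
        positivity
    · simpa [neg_mul] using integrable_exp_neg_mul_sq (show (0:ℝ) < m/3 by positivity)
    · filter_upwards with v
      rcases le_or_gt v 0 with hv | hv
      · have hz : ∀ᶠ t : ℝ in atTop, F t v = 0 := by
          filter_upwards [eventually_gt_atTop (0:ℝ)] with t ht
          apply Set.indicator_of_notMem
          intro hmem
          exact absurd (lt_trans (rpow_pos_of_pos ht _) hmem.1) (not_lt.2 hv)
        rw [Set.indicator_of_notMem (by simpa using hv : v ∉ Ioi (0:ℝ))]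
        exact Tendsto.congr' (hz.mono fun t h => h.symm) tendsto_const_nhds
      · have hlim : Tendsto (fun t : ℝ => sqrt (t * v ^ 2 + t ^ 2) - t) atTop
            (nhds (v ^ 2 / 2)) := by
          have heq : ∀ᶠ t : ℝ in atTop,
              v ^ 2 / (sqrt (v ^ 2 / t + 1) + 1) = sqrt (t * v ^ 2 + t ^ 2) - t := by
            filter_upwards [eventually_gt_atTop (0:ℝ)] with t ht
            have hs : sqrt (t * v ^ 2 + t ^ 2) = t * sqrt (v ^ 2 / t + 1) := by
              rw [show t * v ^ 2 + t ^ 2 = t ^ 2 * (v ^ 2 / t + 1) by field_simp,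
                Real.sqrt_mul (by positivity), Real.sqrt_sq ht.le]
            have hss : sqrt (v ^ 2 / t + 1) ^ 2 = v ^ 2 / t + 1 :=
              Real.sq_sqrt (by positivity)
            have hd : (0:ℝ) < sqrt (v ^ 2 / t + 1) + 1 := by positivity
            rw [hs, div_eq_iff hd.ne']
            have hring : (t * sqrt (v ^ 2 / t + 1) - t) * (sqrt (v ^ 2 / t + 1) + 1)
                = t * (sqrt (v ^ 2 / t + 1) ^ 2 - 1) := by ring
            rw [eq_comm, hring, hss]
            field_simp; ring
          have h1 : Tendsto (fun t : ℝ => v ^ 2 / t + 1) atTop (nhds 1) := by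
            have h0 : Tendsto (fun t : ℝ => v ^ 2 / t) atTop (nhds 0) :=
              Tendsto.div_atTop tendsto_const_nhds tendsto_id
            simpa using h0.add (tendsto_const_nhds (x := (1:ℝ)))
          have h3 : Tendsto (fun t : ℝ => sqrt (v ^ 2 / t + 1) + 1) atTop (nhds 2) := by
            have h4 : Tendsto (fun t : ℝ => sqrt (v ^ 2 / t + 1)) atTop (nhds 1) := by
              have := (Real.continuous_sqrt.tendsto 1).comp h1
              simpa [Function.comp_def, Real.sqrt_one] using this
            have h5 := h4.add (tendsto_const_nhds (x := (1:ℝ)))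
            norm_num at h5
            exact h5
          have h2 : Tendsto (fun t : ℝ => v ^ 2 / (sqrt (v ^ 2 / t + 1) + 1)) atTop
              (nhds (v ^ 2 / 2)) := Tendsto.div tendsto_const_nhds h3 two_ne_zero
          exact Tendsto.congr' heq h2
        have hev : ∀ᶠ t : ℝ in atTop,
            F t v = exp (-(m * (sqrt (t * v ^ 2 + t ^ 2) - t))) := by
          have hL : Tendsto (fun t : ℝ => t ^ (β - 1/2)) atTop (nhds 0) := by
            have := tendsto_rpow_neg_atTop (show (0:ℝ) < 1/2 - β by linarith)
            simpa [neg_sub] using this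
          have hU : Tendsto (fun t : ℝ => t ^ (α - 1/2)) atTop atTop :=
            tendsto_rpow_atTop (by linarith)
          filter_upwards [hL.eventually_lt_const hv, hU.eventually_ge_atTop v] with t h1 h2
          exact Set.indicator_of_mem (mem_Ioc.mpr ⟨h1, h2⟩) _
        have hcomp : Tendsto (fun t : ℝ => exp (-(m * (sqrt (t * v ^ 2 + t ^ 2) - t))))
            atTop (nhds (exp (-(m * (v ^ 2 / 2))))) :=
          (Real.continuous_exp.tendsto _).comp ((hlim.const_mul m).neg)
        rw [Set.indicator_of_mem (mem_Ioi.2 hv)]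
        rw [show -(m/2) * v ^ 2 = -(m * (v ^ 2 / 2)) by ring]
        exact Tendsto.congr' (hev.mono fun t h => h.symm) hcomp
  have hfinal : (∫ v : ℝ, (Ioi (0:ℝ)).indicator (fun v => exp (-(m/2) * v ^ 2)) v)
      = sqrt (π / (2 * m)) := by
    rw [MeasureTheory.integral_indicator measurableSet_Ioi]
    rw [integral_gaussian_Ioi (m/2)]
    rw [show π / (m/2) = 2 ^ 2 * (π / (2 * m)) by field_simp]
    rw [Real.sqrt_mul (by positivity), Real.sqrt_sq (by norm_num)]
    ring
  have eqev : ∀ᶠ t : ℝ in atTop,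
      (∫ u in (t ^ β)..(t ^ α), exp (-m * sqrt (u ^ 2 + t ^ 2))) /
        (t ^ ((1:ℝ)/2) * exp (-m * t)) = ∫ v : ℝ, F t v := by
    filter_upwards [eventually_ge_atTop (1:ℝ)] with t ht
    have ht0 : (0:ℝ) < t := lt_of_lt_of_le one_pos ht
    set c := t ^ ((1:ℝ)/2) with hc
    have hcpos : 0 < c := rpow_pos_of_pos ht0 _
    have hc2 : c ^ 2 = t := by
      rw [hc, ← Real.rpow_natCast (t ^ ((1:ℝ)/2)) 2, ← Real.rpow_mul ht0.le]
      norm_num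
    have hb1 : c * t ^ (β - 1/2) = t ^ β := by
      rw [hc, ← Real.rpow_add ht0, show (1:ℝ)/2 + (β - 1/2) = β by ring]
    have hb2 : c * t ^ (α - 1/2) = t ^ α := by
      rw [hc, ← Real.rpow_add ht0, show (1:ℝ)/2 + (α - 1/2) = α by ring]
    have hsub : c • (∫ v in (t ^ (β - 1/2))..(t ^ (α - 1/2)),
        exp (-m * sqrt ((c * v) ^ 2 + t ^ 2)))
        = ∫ u in (t ^ β)..(t ^ α), exp (-m * sqrt (u ^ 2 + t ^ 2)) := by
      rw [intervalIntegral.smul_integral_comp_mul_left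
        (fun u => exp (-m * sqrt (u ^ 2 + t ^ 2))) c, hb1, hb2]
    rw [← hsub, smul_eq_mul, mul_div_mul_left _ _ hcpos.ne']
    have hJ : (∫ v in (t ^ (β - 1/2))..(t ^ (α - 1/2)), exp (-m * sqrt ((c * v) ^ 2 + t ^ 2)))
        = (∫ v in (t ^ (β - 1/2))..(t ^ (α - 1/2)),
            exp (-(m * (sqrt (t * v ^ 2 + t ^ 2) - t)))) * exp (-m * t) := by
      rw [← intervalIntegral.integral_mul_const]
      apply intervalIntegral.integral_congr
      intro v _
      show exp (-m * sqrt ((c * v) ^ 2 + t ^ 2))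
          = exp (-(m * (sqrt (t * v ^ 2 + t ^ 2) - t))) * exp (-m * t)
      rw [← Real.exp_add, mul_pow, hc2]
      congr 1
      ring
    rw [hJ, mul_div_assoc, div_self (exp_ne_zero _), mul_one]
    have hab : t ^ (β - 1/2) ≤ t ^ (α - 1/2) :=
      rpow_le_rpow_of_exponent_le ht (by linarith)
    rw [intervalIntegral.integral_of_le hab]
    simp only [hFdef]
    rw [MeasureTheory.integral_indicator measurableSet_Ioc]
  rw [hfinal] at key
  exact Tendsto.congr' (eqev.mono fun t h => h.symm) key
end

section
/- Let m > 0 and t > 0. Then |∫_1^∞ (1/√(y²-1) − 1/√(2(y-1))) e^{-mty} dy| ≤ (1/4) · t^{-3/2} · e^{-mt} · ∫_0^∞ w^{1/2} e^{-mw} dw. -/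
open MeasureTheory Filter Real Set

lemma shift_Ioi_aux (f : ℝ → ℝ) (a d : ℝ) :
    ∫ x in Ioi a, f (x + d) = ∫ x in Ioi (a + d), f x := by
  have h := (measurePreserving_add_right volume d).setIntegral_preimage_emb
    (MeasurableEquiv.addRight d).measurableEmbedding f (Ioi (a + d))
  simpa [preimage_add_const_Ioi] using h

lemma shift_Ioi_integrable_aux (f : ℝ → ℝ) (a d : ℝ) :
    IntegrableOn (fun x => f (x + d)) (Ioi a) ↔ IntegrableOn f (Ioi (a + d)) := by
  have h := (measurePreserving_add_right volume d).integrableOn_comp_preimage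
    (f := f) (s := Ioi (a + d)) (MeasurableEquiv.addRight d).measurableEmbedding
  simpa [preimage_add_const_Ioi, Function.comp_def] using h

lemma ptwise_aux {y : ℝ} (hy : 1 < y) :
    |1 / sqrt (y ^ 2 - 1) - 1 / sqrt (2 * (y - 1))| ≤ (1/4) * (y - 1) ^ ((1:ℝ)/2) := by
  have h1 : 0 < y - 1 := by linarith
  set a := sqrt (y - 1) with ha_def
  set b := sqrt (y + 1) with hb_def
  set s := sqrt 2 with hs_def
  have ha : 0 < a := sqrt_pos.mpr h1
  have hs : 0 < s := sqrt_pos.mpr two_pos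
  have hb : s ≤ b := sqrt_le_sqrt (by linarith)
  have hb0 : 0 < b := lt_of_lt_of_le hs hb
  have ha2 : a ^ 2 = y - 1 := sq_sqrt h1.le
  have hb2 : b ^ 2 = y + 1 := sq_sqrt (by linarith)
  have hs2 : s ^ 2 = 2 := sq_sqrt (by norm_num)
  have hs1 : (1:ℝ) ≤ s := by
    rw [hs_def, ← Real.sqrt_one]; exact Real.sqrt_le_sqrt (by norm_num)
  have e1 : sqrt (y ^ 2 - 1) = a * b := by
    rw [show y ^ 2 - 1 = (y - 1) * (y + 1) by ring, sqrt_mul h1.le]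
  have e2 : sqrt (2 * (y - 1)) = s * a := sqrt_mul (by norm_num) _
  have e3 : (y - 1) ^ ((1:ℝ)/2) = a := by rw [ha_def, sqrt_eq_rpow]
  have h4 : 4 ≤ s * b * (b + s) := by
    nlinarith [mul_nonneg (mul_nonneg hs.le (sub_nonneg.mpr hb)) hb0.le]
  rw [e1, e2, e3, abs_sub_comm, abs_of_nonneg]
  · rw [div_sub_div _ _ (by positivity) (by positivity), div_le_iff₀ (by positivity)]
    have hd : (b - s) * (b + s) = a ^ 2 := by nlinarith
    have h7 : 0 ≤ (b - s) * (s * b * (b + s) - 4) :=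
      mul_nonneg (sub_nonneg.mpr hb) (by linarith)
    have h8 : 4 * (b - s) ≤ s * b * a ^ 2 := by nlinarith [h7, hd]
    nlinarith [mul_le_mul_of_nonneg_left h8 ha.le]
  · have h6 : s * a ≤ a * b := by nlinarith
    have h5 : 1 / (a * b) ≤ 1 / (s * a) :=
      one_div_le_one_div_of_le (by positivity) h6
    linarith

/-- `|∫_1^∞ (1/√(y²-1) − 1/√(2(y-1))) e^{-mty} dy|
      ≤ (1/4) t^{-3/2} e^{-mt} ∫_0^∞ w^{1/2} e^{-mw} dw`. -/
theorem stmt4 (m t : ℝ) (hm : 0 < m) (ht : 0 < t) :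
    |∫ y in Ioi (1:ℝ), (1 / sqrt (y ^ 2 - 1) - 1 / sqrt (2 * (y - 1))) * exp (-(m * t) * y)|
      ≤ (1/4) * t ^ (-(3/2) : ℝ) * exp (-m * t) *
        ∫ w in Ioi (0:ℝ), w ^ ((1:ℝ)/2) * exp (-m * w) := by
  have hc : 0 < m * t := mul_pos hm ht
  set c := m * t with hc_def
  set I := ∫ u in Ioi (0:ℝ), u ^ ((1:ℝ)/2) * exp (-c * u) with hI_def
  have hI0 : IntegrableOn (fun u : ℝ => u ^ ((1:ℝ)/2) * exp (-c * u)) (Ioi 0) := by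
    simpa [rpow_one] using
      integrableOn_rpow_mul_exp_neg_mul_rpow (p := 1) (by norm_num : (-1:ℝ) < 1/2) one_pos hc
  -- integrability of the bounding function on `Ioi 1`
  have hIg : IntegrableOn
      (fun y : ℝ => (1/4) * ((y - 1) ^ ((1:ℝ)/2) * exp (-c * y))) (Ioi 1) := by
    have h1 : IntegrableOn
        (fun y : ℝ => (y - 1) ^ ((1:ℝ)/2) * exp (-c * y)) (Ioi 1) := by
      have hiff := shift_Ioi_integrable_aux
        (fun y : ℝ => (y - 1) ^ ((1:ℝ)/2) * exp (-c * y)) 0 1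
      rw [zero_add] at hiff
      rw [← hiff]
      have : IntegrableOn
          (fun x : ℝ => exp (-c) * (x ^ ((1:ℝ)/2) * exp (-c * x))) (Ioi 0) :=
        hI0.const_mul _
      apply this.congr_fun _ measurableSet_Ioi
      intro x _
      simp only [add_sub_cancel_right]
      rw [show -c * (x + 1) = -c + -c * x by ring, Real.exp_add]
      ring
    exact h1.const_mul _
  have key1 : |∫ y in Ioi (1:ℝ),
      (1 / sqrt (y ^ 2 - 1) - 1 / sqrt (2 * (y - 1))) * exp (-c * y)|
      ≤ ∫ y in Ioi (1:ℝ), (1/4) * ((y - 1) ^ ((1:ℝ)/2) * exp (-c * y)) := by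
    have habs : |∫ y in Ioi (1:ℝ),
        (1 / sqrt (y ^ 2 - 1) - 1 / sqrt (2 * (y - 1))) * exp (-c * y)|
        ≤ ∫ y in Ioi (1:ℝ),
          |(1 / sqrt (y ^ 2 - 1) - 1 / sqrt (2 * (y - 1))) * exp (-c * y)| := by
      simpa only [Real.norm_eq_abs] using norm_integral_le_integral_norm
        (μ := volume.restrict (Ioi 1))
        (fun y : ℝ => (1 / sqrt (y ^ 2 - 1) - 1 / sqrt (2 * (y - 1))) * exp (-c * y))
    refine habs.trans ?_
    apply integral_mono_of_nonneg
    · filter_upwards with y using abs_nonneg _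
    · exact hIg
    · filter_upwards [ae_restrict_mem measurableSet_Ioi] with y hy
      have hy1 : (1:ℝ) < y := hy
      have hb := ptwise_aux hy1
      calc |(1 / sqrt (y ^ 2 - 1) - 1 / sqrt (2 * (y - 1))) * exp (-c * y)|
          = |1 / sqrt (y ^ 2 - 1) - 1 / sqrt (2 * (y - 1))| * exp (-c * y) := by
            rw [abs_mul, abs_of_pos (exp_pos _)]
        _ ≤ (1/4) * (y - 1) ^ ((1:ℝ)/2) * exp (-c * y) :=
            mul_le_mul_of_nonneg_right hb (exp_pos _).le
        _ = (1/4) * ((y - 1) ^ ((1:ℝ)/2) * exp (-c * y)) := by ring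
  have key2 : (∫ y in Ioi (1:ℝ), (1/4) * ((y - 1) ^ ((1:ℝ)/2) * exp (-c * y)))
      = (1/4) * exp (-c) * I := by
    have hsh := shift_Ioi_aux
      (fun y : ℝ => (1/4) * ((y - 1) ^ ((1:ℝ)/2) * exp (-c * y))) 0 1
    rw [zero_add] at hsh
    rw [← hsh]
    have : ∀ x ∈ Ioi (0:ℝ),
        (1/4) * ((x + 1 - 1) ^ ((1:ℝ)/2) * exp (-c * (x + 1)))
          = (1/4) * exp (-c) * (x ^ ((1:ℝ)/2) * exp (-c * x)) := by
      intro x _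
      simp only [add_sub_cancel_right]
      rw [show -c * (x + 1) = -c + -c * x by ring, Real.exp_add]
      ring
    rw [setIntegral_congr_fun measurableSet_Ioi this, integral_const_mul]
  have key3 : (∫ w in Ioi (0:ℝ), w ^ ((1:ℝ)/2) * exp (-m * w))
      = t ^ ((3:ℝ)/2) * I := by
    have h : (∫ u in Ioi (0:ℝ), (t * u) ^ ((1:ℝ)/2) * exp (-m * (t * u)))
        = t⁻¹ * ∫ w in Ioi (0:ℝ), w ^ ((1:ℝ)/2) * exp (-m * w) := by
      simpa using integral_comp_mul_left_Ioi
        (fun w : ℝ => w ^ ((1:ℝ)/2) * exp (-m * w)) 0 ht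
    have hcg : (∫ u in Ioi (0:ℝ), (t * u) ^ ((1:ℝ)/2) * exp (-m * (t * u)))
        = t ^ ((1:ℝ)/2) * I := by
      rw [hI_def, ← integral_const_mul]
      apply setIntegral_congr_fun measurableSet_Ioi
      intro u hu
      show (t * u) ^ ((1:ℝ)/2) * exp (-m * (t * u))
          = t ^ ((1:ℝ)/2) * (u ^ ((1:ℝ)/2) * exp (-c * u))
      rw [mul_rpow ht.le (le_of_lt hu), show -m * (t * u) = -c * u by
        rw [hc_def]; ring]
      ring
    rw [hcg, inv_mul_eq_div, eq_div_iff ht.ne'] at h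
    have hpow : t ^ ((3:ℝ)/2) = t * t ^ ((1:ℝ)/2) := by
      rw [show (3:ℝ)/2 = 1 + 1/2 by norm_num, Real.rpow_add ht, Real.rpow_one]
    rw [hpow, ← h]
    ring
  have he : exp (-m * t) = exp (-c) := by rw [hc_def]; ring_nf
  have ht1 : t ^ (-(3/2) : ℝ) * t ^ ((3:ℝ)/2) = 1 := by
    rw [← Real.rpow_add ht]; norm_num
  calc |∫ y in Ioi (1:ℝ),
      (1 / sqrt (y ^ 2 - 1) - 1 / sqrt (2 * (y - 1))) * exp (-c * y)|
      ≤ ∫ y in Ioi (1:ℝ), (1/4) * ((y - 1) ^ ((1:ℝ)/2) * exp (-c * y)) := key1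
    _ = (1/4) * exp (-c) * I := key2
    _ = (1/4) * (t ^ (-(3/2) : ℝ) * t ^ ((3:ℝ)/2)) * exp (-c) * I := by
        rw [ht1]; ring
    _ = (1/4) * t ^ (-(3/2) : ℝ) * exp (-m * t) * (t ^ ((3:ℝ)/2) * I) := by
        rw [he]; ring
    _ = (1/4) * t ^ (-(3/2) : ℝ) * exp (-m * t) *
        ∫ w in Ioi (0:ℝ), w ^ ((1:ℝ)/2) * exp (-m * w) := by rw [key3]
end

section
/- Let m > 0. Then the limit as t → ∞ of (∫_{-∞}^{∞} e^{-t√(m²+p²)} / (2√(m²+p²)) dp) / (t^{-1/2} e^{-mt}) exists and equals √(π/(2m)). -/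
open MeasureTheory Filter Real Set

private lemma oz_cov (m : ℝ) (hm : 0 < m) (t : ℝ) (ht : 0 < t) :
    (∫ s in Ioi (0:ℝ), exp (-s) / sqrt (s * (2*m + s/t)))
      = Real.sqrt t * exp (m*t) *
        ∫ p in Ioi (0:ℝ), exp (-t * sqrt (m ^ 2 + p ^ 2)) / sqrt (m ^ 2 + p ^ 2) := by
  set u : ℝ → ℝ := fun p => sqrt (m^2 + p^2) with hu
  have hupos : ∀ p : ℝ, 0 < u p := fun p => Real.sqrt_pos.mpr (by positivity)
  have hugt : ∀ p ∈ Ioi (0:ℝ), m < u p := by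
    intro p hp
    have : m = sqrt (m^2) := by rw [Real.sqrt_sq hm.le]
    rw [this]
    exact Real.sqrt_lt_sqrt (by positivity) (by nlinarith [mem_Ioi.mp hp])
  set g : ℝ → ℝ := fun p => t * (u p - m) with hg
  have hderiv : ∀ p ∈ Ioi (0:ℝ), HasDerivWithinAt g (t * (p / u p)) (Ioi 0) p := by
    intro p hp
    have h1 : HasDerivAt (fun p : ℝ => m^2 + p^2) (2*p) p := by
      simpa using ((hasDerivAt_pow 2 p).const_add (m^2))
    have h2 : HasDerivAt u (2*p / (2 * sqrt (m^2+p^2))) p := h1.sqrt (by positivity)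
    have h3 : HasDerivAt g (t * (2*p / (2 * sqrt (m^2+p^2)))) p := (h2.sub_const m).const_mul t
    have : t * (2*p / (2 * sqrt (m^2+p^2))) = t * (p / u p) := by
      rw [hu]; ring_nf
    rw [← this]
    exact h3.hasDerivWithinAt
  have hmono : StrictMonoOn g (Ioi 0) := by
    intro a ha b hb hab
    have : u a < u b := Real.sqrt_lt_sqrt (by positivity)
      (by nlinarith [mem_Ioi.mp ha, mem_Ioi.mp hb])
    simp only [hg]; nlinarith
  have himg : g '' (Ioi 0) = Ioi 0 := by
    apply Subset.antisymm
    · rintro _ ⟨p, hp, rfl⟩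
      have := hugt p hp
      simp only [hg, mem_Ioi]
      nlinarith
    · intro s hs
      have hs' : (0:ℝ) < s := hs
      refine ⟨sqrt (s/t * (2*m + s/t)), mem_Ioi.mpr (Real.sqrt_pos.mpr (by positivity)), ?_⟩
      have hsq : (sqrt (s/t * (2*m + s/t)))^2 = s/t * (2*m + s/t) :=
        Real.sq_sqrt (by positivity)
      have : u (sqrt (s/t * (2*m + s/t))) = m + s/t := by
        show sqrt (m^2 + (sqrt (s/t * (2*m + s/t)))^2) = m + s/t
        have h2 : m^2 + (sqrt (s/t * (2*m + s/t)))^2 = (m + s/t)^2 := by rw [hsq]; ring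
        rw [h2, Real.sqrt_sq (by positivity)]
      simp only [hg, this]
      field_simp
      ring
  have key := integral_image_eq_integral_abs_deriv_smul measurableSet_Ioi hderiv
    (hmono.injOn) (fun s => exp (-s) / sqrt (s * (2*m + s/t)))
  rw [himg] at key
  rw [key]
  rw [← MeasureTheory.integral_const_mul]
  apply setIntegral_congr_fun measurableSet_Ioi
  intro p hp
  have hp' : (0:ℝ) < p := hp
  have hum := hugt p hp
  have hup := hupos p
  have husq : (u p)^2 = m^2 + p^2 := Real.sq_sqrt (by positivity)
  have habs : |t * (p / u p)| = t * (p / u p) := abs_of_pos (by positivity)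
  simp only [smul_eq_mul, habs, hg]
  have hin : t * (u p - m) * (2*m + t * (u p - m)/t) = (sqrt t * p)^2 := by
    rw [mul_pow, Real.sq_sqrt ht.le]
    field_simp
    nlinarith [husq]
  rw [hin, Real.sqrt_sq (by positivity)]
  have hexp : rexp (-(t * (u p - m))) = rexp (m*t) * rexp (-t * u p) := by
    rw [← Real.exp_add]; congr 1; ring
  have hU : sqrt (m^2 + p^2) = u p := rfl
  rw [hexp, hU]
  have hT : Real.sqrt t ≠ 0 := ne_of_gt (Real.sqrt_pos.mpr ht)
  field_simp
  linear_combination (Real.mul_self_sqrt ht.le).symm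

private lemma oz_bound_eq (m : ℝ) (hm : 0 < m) :
    EqOn (fun s : ℝ => exp (-s) / sqrt (s * (2*m)))
      (fun s : ℝ => exp (-s) * s ^ ((1/2 : ℝ) - 1) * (sqrt (2*m))⁻¹) (Ioi 0) := by
  intro s hs
  have hs' : (0:ℝ) < s := hs
  have h1 : s ^ ((1/2:ℝ) - 1) = (sqrt s)⁻¹ := by
    rw [show (1/2:ℝ) - 1 = -(1/(2:ℝ)) by norm_num, Real.rpow_neg hs'.le,
      ← Real.sqrt_eq_rpow]
  simp only [h1, Real.sqrt_mul hs'.le]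
  field_simp

private lemma oz_bound_integrable (m : ℝ) (hm : 0 < m) :
    IntegrableOn (fun s : ℝ => exp (-s) / sqrt (s * (2*m))) (Ioi 0) := by
  refine IntegrableOn.congr_fun ((Real.GammaIntegral_convergent one_half_pos).mul_const
    ((sqrt (2*m))⁻¹)) (fun s hs => ((oz_bound_eq m hm) hs).symm) measurableSet_Ioi

private lemma oz_bound_integral (m : ℝ) (hm : 0 < m) :
    ∫ s in Ioi (0:ℝ), exp (-s) / sqrt (s * (2*m)) = sqrt (π / (2*m)) := by
  rw [setIntegral_congr_fun measurableSet_Ioi (oz_bound_eq m hm),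
    MeasureTheory.integral_mul_const, ← Real.Gamma_eq_integral one_half_pos,
    Real.Gamma_one_half_eq, Real.sqrt_div Real.pi_pos.le, div_eq_mul_inv]

private lemma oz_limit (m : ℝ) (hm : 0 < m) :
    Tendsto (fun t : ℝ => ∫ s in Ioi (0:ℝ), exp (-s) / sqrt (s * (2*m + s/t)))
      atTop (nhds (sqrt (π / (2*m)))) := by
  rw [← oz_bound_integral m hm]
  apply tendsto_integral_filter_of_dominated_convergence
    (fun s : ℝ => exp (-s) / sqrt (s * (2*m)))
  · filter_upwards [eventually_ge_atTop (1:ℝ)] with t ht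
    have ht0 : (0:ℝ) < t := lt_of_lt_of_le one_pos ht
    apply ContinuousOn.aestronglyMeasurable _ measurableSet_Ioi
    apply ContinuousOn.div (by fun_prop)
    · exact (Real.continuous_sqrt.comp (by continuity)).continuousOn
    · intro s hs
      have hs' : (0:ℝ) < s := hs
      exact ne_of_gt (Real.sqrt_pos.mpr (mul_pos hs' (by positivity)))
  · filter_upwards [eventually_ge_atTop (1:ℝ)] with t ht
    have ht0 : (0:ℝ) < t := lt_of_lt_of_le one_pos ht
    rw [ae_restrict_iff' measurableSet_Ioi]
    refine ae_of_all _ fun s hs => ?_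
    have hs' : (0:ℝ) < s := hs
    rw [Real.norm_eq_abs, abs_of_nonneg (by positivity)]
    exact div_le_div_of_nonneg_left (Real.exp_pos _).le
      (Real.sqrt_pos.mpr (by positivity))
      (Real.sqrt_le_sqrt (by nlinarith [mul_nonneg hs'.le (div_nonneg hs'.le ht0.le)]))
  · exact oz_bound_integrable m hm
  · rw [ae_restrict_iff' measurableSet_Ioi]
    refine ae_of_all _ fun s hs => ?_
    have hs' : (0:ℝ) < s := hs
    have h1 : Tendsto (fun t : ℝ => s / t) atTop (nhds 0) := by
      simpa [div_eq_mul_inv] using tendsto_inv_atTop_zero.const_mul s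
    have h2 : ContinuousAt (fun x : ℝ => exp (-s) / sqrt (s * (2*m + x))) 0 := by
      apply ContinuousAt.div continuousAt_const
      · exact (Real.continuous_sqrt.continuousAt).comp (by fun_prop)
      · simp only [add_zero]
        exact ne_of_gt (Real.sqrt_pos.mpr (by positivity))
    have := h2.tendsto.comp h1
    simpa [Function.comp_def] using this

/-- Ornstein–Zernike asymptotic for the single-mass contribution:
`(∫_{-∞}^∞ e^{-t√(m²+p²)}/(2√(m²+p²)) dp) / (t^{-1/2} e^{-mt}) → √(π/(2m))` as `t → ∞`. -/
theorem stmt5 (m : ℝ) (hm : 0 < m) :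
    Tendsto (fun t : ℝ =>
        (∫ p : ℝ, exp (-t * sqrt (m ^ 2 + p ^ 2)) / (2 * sqrt (m ^ 2 + p ^ 2))) /
          (t ^ (-(1/2) : ℝ) * exp (-m * t)))
      atTop (nhds (sqrt (π / (2 * m)))) := by
  apply (oz_limit m hm).congr'
  filter_upwards [eventually_ge_atTop (1:ℝ)] with t ht
  have ht0 : (0:ℝ) < t := lt_of_lt_of_le one_pos ht
  have hkey := oz_cov m hm t ht0
  have heven : (∫ p : ℝ, exp (-t * sqrt (m ^ 2 + p ^ 2)) / (2 * sqrt (m ^ 2 + p ^ 2)))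
      = 2 * ∫ p in Ioi (0:ℝ), exp (-t * sqrt (m^2+p^2)) / (2 * sqrt (m^2+p^2)) := by
    rw [← integral_comp_abs (f := fun x => exp (-t * sqrt (m^2+x^2)) / (2 * sqrt (m^2+x^2)))]
    congr 1; funext p; rw [sq_abs]
  have hhalf : (∫ p in Ioi (0:ℝ), exp (-t * sqrt (m^2+p^2)) / sqrt (m^2+p^2))
      = 2 * ∫ p in Ioi (0:ℝ), exp (-t * sqrt (m^2+p^2)) / (2 * sqrt (m^2+p^2)) := by
    rw [← MeasureTheory.integral_const_mul]
    apply setIntegral_congr_fun measurableSet_Ioi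
    intro p hp
    have : sqrt (m^2+p^2) ≠ 0 := ne_of_gt (Real.sqrt_pos.mpr (by positivity))
    field_simp
  have h1 : (∫ p : ℝ, exp (-t * sqrt (m ^ 2 + p ^ 2)) / (2 * sqrt (m ^ 2 + p ^ 2)))
      = ∫ p in Ioi (0:ℝ), exp (-t * sqrt (m^2+p^2)) / sqrt (m^2+p^2) :=
    heven.trans hhalf.symm
  rw [hkey, h1]
  have h2 : t ^ (-(1/2) : ℝ) = (Real.sqrt t)⁻¹ := by
    rw [Real.rpow_neg ht0.le, Real.sqrt_eq_rpow]
  have h3 : exp (-m * t) = (exp (m*t))⁻¹ := by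
    rw [← Real.exp_neg]; ring_nf
  rw [h2, h3]
  have hT : Real.sqrt t ≠ 0 := ne_of_gt (Real.sqrt_pos.mpr ht0)
  have hE : rexp (m*t) ≠ 0 := (Real.exp_pos _).ne'
  field_simp
end

section
/- Let m₁ > 0 and ε > 0, and let ρ̃ be a Borel measure on the real line supported in [m₁, ∞) with ρ̃((m₁, m₁+ε)) = 0 and ∫ (1/m) dρ̃(m) < ∞. Define, for t > 0, Ĥ(t) = ∫ ( ∫_{-∞}^{∞} e^{-t√(m²+p²)} / (2√(m²+p²)) dp ) dρ̃(m). Then the limit as t → ∞ of Ĥ(t) / (t^{-1/2} e^{-m₁ t}) exists and equals ρ̃({m₁}) · √(π/(2m₁)). -/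
open MeasureTheory Filter Real Set

lemma aux_int_exp_abs {a : ℝ} (ha : 0 < a) :
    Integrable (fun x : ℝ => exp (-(a * |x|))) := by
  have hIoi : IntegrableOn (fun x : ℝ => exp (-(a * |x|))) (Ioi 0) := by
    refine (exp_neg_integrableOn_Ioi 0 ha).congr_fun (fun x hx => ?_) measurableSet_Ioi
    rw [abs_of_pos hx]; ring_nf
  have hIic : IntegrableOn (fun x : ℝ => exp (-(a * |x|))) (Iic 0) := by
    rw [← Measure.map_neg_eq_self (volume : Measure ℝ)]
    have m : MeasurableEmbedding fun x : ℝ => -x := (Homeomorph.neg ℝ).measurableEmbedding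
    rw [m.integrableOn_map_iff]
    simp_rw [Function.comp_def, abs_neg, neg_preimage, neg_Iic, neg_zero]
    exact Iff.mpr integrableOn_Ici_iff_integrableOn_Ioi hIoi
  have h := hIic.union hIoi
  rwa [Iic_union_Ioi, integrableOn_univ] at h

lemma aux_integral_exp_abs {a : ℝ} (ha : 0 < a) :
    (∫ x : ℝ, exp (-(a * |x|))) = 2 / a := by
  rw [integral_comp_abs (f := fun x => exp (-(a * x)))]
  have h1 := integral_comp_mul_left_Ioi (fun x => exp (-x)) 0 ha
  simp only [mul_zero, integral_exp_neg_Ioi_zero, smul_eq_mul, mul_one] at h1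
  simp_rw [← neg_mul] at h1
  rw [show (fun x : ℝ => exp (-(a * x))) = (fun x : ℝ => exp (-a * x)) by funext x; ring_nf] at *
  rw [h1]; field_simp

set_option maxHeartbeats 2000000 in
/-- Proposition (Ornstein–Zernike behavior under an upper mass gap): if `ρ̃` is supported in
`[m₁, ∞)`, gives no mass to `(m₁, m₁+ε)`, and `∫ (1/m) dρ̃(m) < ∞`, then with
`Ĥ(t) = ∫ (∫ e^{-t√(m²+p²)}/(2√(m²+p²)) dp) dρ̃(m)` one has
`Ĥ(t)/(t^{-1/2} e^{-m₁ t}) → ρ̃({m₁}) √(π/(2m₁))` as `t → ∞`. -/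
theorem stmt6 (m₁ ε : ℝ) (hm : 0 < m₁) (hε : 0 < ε) (ρ : Measure ℝ)
    (hsupp : ρ (Iio m₁) = 0) (hgap : ρ (Ioo m₁ (m₁ + ε)) = 0)
    (hfin : ∫⁻ m, ENNReal.ofReal (1 / m) ∂ρ < ⊤) :
    Tendsto (fun t : ℝ =>
        (∫ m, (∫ p : ℝ, exp (-t * sqrt (m ^ 2 + p ^ 2)) / (2 * sqrt (m ^ 2 + p ^ 2))) ∂ρ) /
          (t ^ (-(1/2) : ℝ) * exp (-m₁ * t)))
      atTop (nhds ((ρ {m₁}).toReal * sqrt (π / (2 * m₁)))) := by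
  have hmε : (0:ℝ) < m₁ + ε := by linarith
  have hm2 : (0:ℝ) < 2 * m₁ := by linarith
  set δ : ℝ := (ε/2)/(m₁+ε) with hδdef
  have hδ : 0 < δ := by positivity
  set g : ℝ → ℝ → ℝ :=
    fun t m => ∫ p : ℝ, exp (-t * sqrt (m ^ 2 + p ^ 2)) / (2 * sqrt (m ^ 2 + p ^ 2)) with hgdef
  set d : ℝ → ℝ := fun t => t ^ (-(1/2) : ℝ) * exp (-m₁ * t) with hddef
  set c : ℝ → ℝ := fun t => exp (-((m₁+ε/2)*t)) * (δ*t)⁻¹ with hcdef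
  set I : ℝ := ∫ m in Ici (m₁+ε), 1/m ∂ρ with hIdef
  -- measurability of g t
  have hgmeas : ∀ t : ℝ, StronglyMeasurable (g t) := by
    intro t
    have hf : StronglyMeasurable (fun q : ℝ × ℝ =>
        exp (-t * sqrt (q.1 ^ 2 + q.2 ^ 2)) / (2 * sqrt (q.1 ^ 2 + q.2 ^ 2))) := by
      apply Measurable.stronglyMeasurable
      fun_prop
    exact hf.integral_prod_right'
  -- nonnegativity
  have hgnn : ∀ t m, 0 ≤ g t m := by
    intro t m
    apply integral_nonneg
    intro p
    positivity
  -- d positive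
  have hd : ∀ t : ℝ, 0 < t → 0 < d t := by
    intro t ht
    exact mul_pos (rpow_pos_of_pos ht _) (exp_pos _)
  -- the atom is finite
  have hatom : ρ {m₁} < ⊤ := by
    have h1 : (∫⁻ m in {m₁}, ENNReal.ofReal (1/m) ∂ρ) ≤ ∫⁻ m, ENNReal.ofReal (1/m) ∂ρ :=
      setLIntegral_le_lintegral _ _
    rw [lintegral_singleton] at h1
    by_contra h
    rw [not_lt, top_le_iff] at h
    rw [h, ENNReal.mul_top (by rw [Ne, ENNReal.ofReal_eq_zero, not_le]; positivity)] at h1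
    exact absurd (lt_of_le_of_lt h1 hfin) (lt_irrefl _)
  -- 1/m integrable on the tail
  have hIm : Integrable (fun m : ℝ => 1/m) (ρ.restrict (Ici (m₁+ε))) := by
    constructor
    · exact (measurable_const.div measurable_id).aestronglyMeasurable
    · rw [hasFiniteIntegral_iff_norm]
      calc ∫⁻ m in Ici (m₁+ε), ENNReal.ofReal ‖1/m‖ ∂ρ
          = ∫⁻ m in Ici (m₁+ε), ENNReal.ofReal (1/m) ∂ρ := by
            apply setLIntegral_congr_fun_ae measurableSet_Ici
            refine ae_of_all _ fun m hmm => ?_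
            have hm0 : 0 < m := lt_of_lt_of_le hmε hmm
            rw [Real.norm_eq_abs, abs_of_pos (by positivity)]
        _ ≤ ∫⁻ m, ENNReal.ofReal (1/m) ∂ρ := setLIntegral_le_lintegral _ _
        _ < ⊤ := hfin
  -- lower bounds for sqrt
  have hsqm : ∀ m : ℝ, 0 ≤ m → ∀ p : ℝ, m ≤ sqrt (m^2 + p^2) := by
    intro m hm0 p
    calc m = sqrt (m^2) := (Real.sqrt_sq hm0).symm
      _ ≤ sqrt (m^2+p^2) := Real.sqrt_le_sqrt (by nlinarith [sq_nonneg p])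
  have hsqp : ∀ m p : ℝ, |p| ≤ sqrt (m^2 + p^2) := by
    intro m p
    rw [← Real.sqrt_sq_eq_abs]
    exact Real.sqrt_le_sqrt (by nlinarith [sq_nonneg m])
  -- pointwise bound on the tail
  have hbound : ∀ t : ℝ, 1 ≤ t → ∀ m : ℝ, m₁ + ε ≤ m → g t m ≤ c t * (1/m) := by
    intro t ht m hmm
    have ht0 : 0 < t := lt_of_lt_of_le one_pos ht
    have hm0 : 0 < m := lt_of_lt_of_le hmε hmm
    have hδ1 : δ < 1 := by rw [hδdef, div_lt_one hmε]; linarith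
    have hδε : δ * (m₁+ε) = ε/2 := by rw [hδdef]; field_simp
    have hsq : ∀ p : ℝ, m₁ + ε/2 + δ * |p| ≤ sqrt (m^2 + p^2) := by
      intro p
      have h1 := hsqm m hm0.le p
      have h2 := hsqp m p
      nlinarith [mul_le_mul_of_nonneg_left h1 (sub_nonneg.mpr hδ1.le),
        mul_le_mul_of_nonneg_left h2 hδ.le,
        mul_le_mul_of_nonneg_left hmm (sub_nonneg.mpr hδ1.le)]
    have hpt : ∀ p : ℝ, exp (-t * sqrt (m^2+p^2)) / (2 * sqrt (m^2+p^2))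
        ≤ (exp (-((m₁+ε/2)*t)) / (2*m)) * exp (-((δ*t) * |p|)) := by
      intro p
      have h1 := hsqm m hm0.le p
      have heq : (exp (-((m₁+ε/2)*t)) / (2*m)) * exp (-((δ*t) * |p|))
          = exp (-t * (m₁ + ε/2 + δ * |p|)) / (2*m) := by
        rw [div_mul_eq_mul_div, ← Real.exp_add]
        ring_nf
      rw [heq]
      apply div_le_div₀ (exp_pos _).le _ (by linarith) (by linarith)
      apply Real.exp_le_exp.mpr
      have := hsq p
      nlinarith [hsq p]
    calc g t m ≤ ∫ p : ℝ, (exp (-((m₁+ε/2)*t)) / (2*m)) * exp (-((δ*t) * |p|)) := by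
          apply integral_mono_of_nonneg
          · exact ae_of_all _ fun p => by positivity
          · exact (aux_int_exp_abs (by positivity : (0:ℝ) < δ*t)).const_mul _
          · exact ae_of_all _ hpt
      _ = (exp (-((m₁+ε/2)*t)) / (2*m)) * (2/(δ*t)) := by
          rw [integral_const_mul, aux_integral_exp_abs (by positivity : (0:ℝ) < δ*t)]
      _ = c t * (1/m) := by
          rw [hcdef]
          field_simp
  -- tail integrability
  have hTailInt : ∀ t : ℝ, 1 ≤ t → IntegrableOn (g t) (Ici (m₁+ε)) ρ := by
    intro t ht
    refine (hIm.const_mul (c t)).mono' ((hgmeas t).aestronglyMeasurable.restrict) ?_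
    rw [ae_restrict_iff' measurableSet_Ici]
    refine ae_of_all _ fun m hmm => ?_
    rw [Real.norm_eq_abs, abs_of_nonneg (hgnn t m)]
    exact hbound t ht m hmm
  -- splitting
  have hsplit : ∀ t : ℝ, 1 ≤ t →
      (∫ m, g t m ∂ρ) = (ρ {m₁}).toReal * g t m₁ + ∫ m in Ici (m₁+ε), g t m ∂ρ := by
    intro t ht
    have hS : ∀ᵐ m ∂ρ, m ∈ ({m₁} ∪ Ici (m₁+ε) : Set ℝ) := by
      rw [ae_iff]
      refine measure_mono_null ?_
        (measure_union_null hsupp hgap : ρ (Iio m₁ ∪ Ioo m₁ (m₁+ε)) = 0)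
      intro m hmm
      simp only [mem_union, mem_singleton_iff, mem_Ici, not_or, not_le, mem_setOf_eq,
        mem_Iio, mem_Ioo] at hmm ⊢
      rcases lt_trichotomy m m₁ with h | h | h
      · exact Or.inl h
      · exact absurd h hmm.1
      · exact Or.inr ⟨h, hmm.2⟩
    have h0 : (∫ m, g t m ∂ρ) = ∫ m in ({m₁} ∪ Ici (m₁+ε) : Set ℝ), g t m ∂ρ := by
      conv_lhs => rw [← Measure.restrict_eq_self_of_ae_mem hS]
    have hdisj : Disjoint ({m₁} : Set ℝ) (Ici (m₁+ε)) := by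
      rw [Set.disjoint_singleton_left, mem_Ici, not_le]
      linarith
    have hsing : IntegrableOn (g t) {m₁} ρ := Iff.mpr integrableOn_singleton_iff (Or.inr hatom)
    rw [h0, setIntegral_union hdisj measurableSet_Ici hsing (hTailInt t ht),
      integral_singleton, smul_eq_mul, Measure.real]
  -- tail bound
  have hBle : ∀ t : ℝ, 1 ≤ t → (∫ m in Ici (m₁+ε), g t m ∂ρ) ≤ c t * I := by
    intro t ht
    have h := setIntegral_mono_on (hTailInt t ht) (hIm.const_mul (c t)) measurableSet_Ici
      (fun m hmm => hbound t ht m hmm)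
    rwa [integral_const_mul] at h
  -- tail tendsto 0
  have hB : Tendsto (fun t => (∫ m in Ici (m₁+ε), g t m ∂ρ) / d t) atTop (nhds 0) := by
    have hupper : Tendsto (fun t : ℝ => (I * δ⁻¹) * (t ^ (-(1/2):ℝ) * exp (-(ε/2*t))))
        atTop (nhds 0) := by
      have h1 : Tendsto (fun t : ℝ => t ^ (-(1/2):ℝ)) atTop (nhds 0) :=
        tendsto_rpow_neg_atTop (by norm_num)
      have h2 : Tendsto (fun t : ℝ => exp (-(ε/2*t))) atTop (nhds 0) := by
        have h3 : Tendsto (fun t : ℝ => ε/2*t) atTop atTop :=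
          Tendsto.const_mul_atTop (by positivity) tendsto_id
        exact tendsto_exp_neg_atTop_nhds_zero.comp h3
      have := (h1.mul h2).const_mul (I * δ⁻¹)
      simpa using this
    apply tendsto_of_tendsto_of_tendsto_of_le_of_le' tendsto_const_nhds hupper
    · filter_upwards [eventually_ge_atTop (1:ℝ)] with t ht
      exact div_nonneg (setIntegral_nonneg measurableSet_Ici fun m _ => hgnn t m)
        (hd t (by linarith)).le
    · filter_upwards [eventually_ge_atTop (1:ℝ)] with t ht
      have ht0 : (0:ℝ) < t := by linarith
      have h1 : (∫ m in Ici (m₁+ε), g t m ∂ρ) / d t ≤ (c t * I) / d t :=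
        (div_le_div_iff_of_pos_right (hd t ht0)).mpr (hBle t ht)
      refine h1.trans (le_of_eq ?_)
      rw [div_eq_iff (hd t ht0).ne']
      simp only [hcdef, hddef]
      have hexp : exp (-((m₁+ε/2)*t)) = exp (-(ε/2*t)) * exp (-m₁*t) := by
        rw [← Real.exp_add]; ring_nf
      have hss : t ^ (-(1/2):ℝ) * t ^ (-(1/2):ℝ) = t⁻¹ := by
        rw [← Real.rpow_add ht0]
        norm_num
        exact Real.rpow_neg_one t
      rw [hexp, mul_inv, ← hss]
      ring
  -- Gaussian limit integral
  have hgauss : (∫ u : ℝ, exp (-(u^2/(2*m₁))) / (2*m₁)) = sqrt (π/(2*m₁)) := by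
    have h1 : ∀ u : ℝ, exp (-(u^2/(2*m₁))) / (2*m₁) = exp (-(2*m₁)⁻¹ * u^2) / (2*m₁) := by
      intro u; rw [neg_mul]; congr 2; field_simp
    simp_rw [h1]
    rw [integral_div, integral_gaussian]
    rw [show π / (2*m₁)⁻¹ = π * (2*m₁) by field_simp, Real.sqrt_mul pi_nonneg, Real.sqrt_div pi_nonneg, mul_div_assoc,
      Real.sqrt_div_self', mul_one_div]
  -- key algebraic identity
  have hkey : ∀ t : ℝ, 0 < t → ∀ u : ℝ,
      m₁*t - t*sqrt (m₁^2+u^2/t) = -(u^2/(sqrt (m₁^2+u^2/t)+m₁)) := by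
    intro t ht0 u
    have hXnn : (0:ℝ) ≤ m₁^2 + u^2/t := by positivity
    have hsq : sqrt (m₁^2+u^2/t)^2 = m₁^2+u^2/t := Real.sq_sqrt hXnn
    have hspos : 0 < sqrt (m₁^2+u^2/t) + m₁ := by
      have := Real.sqrt_nonneg (m₁^2+u^2/t); linarith
    rw [eq_comm, neg_eq_iff_eq_neg, div_eq_iff hspos.ne']
    have hu : t * (u^2/t) = u^2 := by field_simp
    linear_combination (-t)*hsq - hu
  -- sqrt lower bound
  have hsqge : ∀ t : ℝ, 0 < t → ∀ u : ℝ, m₁ ≤ sqrt (m₁^2+u^2/t) := by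
    intro t ht0 u
    calc m₁ = sqrt (m₁^2) := (Real.sqrt_sq hm.le).symm
      _ ≤ _ := Real.sqrt_le_sqrt (by have := div_nonneg (sq_nonneg u) ht0.le; linarith)
  -- dominated convergence
  have hDCT : Tendsto (fun t : ℝ =>
      ∫ u : ℝ, exp (-(u^2 / (sqrt (m₁^2 + u^2/t) + m₁))) / (2 * sqrt (m₁^2 + u^2/t)))
      atTop (nhds (∫ u : ℝ, exp (-(u^2/(2*m₁))) / (2*m₁))) := by
    apply tendsto_integral_filter_of_dominated_convergence
      (bound := fun u : ℝ => exp (2*m₁) * exp (-(1 * |u|)) / (2*m₁))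
    · filter_upwards [eventually_ge_atTop (1:ℝ)] with t ht
      have ht0 : (0:ℝ) < t := by linarith
      apply Continuous.aestronglyMeasurable
      have hc1 : Continuous fun u : ℝ => sqrt (m₁^2 + u^2/t) :=
        Real.continuous_sqrt.comp (continuous_const.add ((continuous_pow 2).div_const t))
      refine Continuous.div ?_ (continuous_const.mul hc1) ?_
      · exact Real.continuous_exp.comp
          (((continuous_pow 2).div (hc1.add continuous_const)
            (fun u => by have := hsqge t ht0 u; exact ne_of_gt (by simp only [Pi.add_apply]; linarith))).neg)
      · intro u
        have := hsqge t ht0 u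
        positivity
    · filter_upwards [eventually_ge_atTop (1:ℝ)] with t ht
      refine ae_of_all _ fun u => ?_
      have ht0 : (0:ℝ) < t := by linarith
      have h1 := hsqge t ht0 u
      have hsnn : 0 ≤ sqrt (m₁^2+u^2/t) := Real.sqrt_nonneg _
      rw [Real.norm_eq_abs, abs_of_nonneg (by positivity)]
      have hub : sqrt (m₁^2+u^2/t) + m₁ ≤ 2*m₁ + |u| := by
        have h2 : sqrt (m₁^2+u^2/t) ≤ m₁ + |u| := by
          rw [show m₁ + |u| = sqrt ((m₁+|u|)^2) from
            (Real.sqrt_sq (by positivity)).symm]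
          apply Real.sqrt_le_sqrt
          have h3 : u^2/t ≤ u^2 := div_le_self (sq_nonneg u) ht
          nlinarith [abs_nonneg u, sq_abs u]
        linarith
      have hexp2 : -(u^2/(sqrt (m₁^2+u^2/t)+m₁)) ≤ 2*m₁ - |u| := by
        have hpos : 0 < sqrt (m₁^2+u^2/t)+m₁ := by linarith
        have h2 : |u| - 2*m₁ ≤ u^2/(sqrt (m₁^2+u^2/t)+m₁) := by
          rw [le_div_iff₀ hpos]
          nlinarith [sq_abs u, hub, abs_nonneg u, hpos]
        linarith
      calc exp (-(u^2/(sqrt (m₁^2+u^2/t)+m₁))) / (2 * sqrt (m₁^2+u^2/t))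
          ≤ exp (2*m₁ - |u|) / (2*m₁) :=
            div_le_div₀ (exp_pos _).le (Real.exp_le_exp.mpr hexp2) hm2 (by linarith)
        _ = exp (2*m₁) * exp (-(1*|u|)) / (2*m₁) := by
            rw [← Real.exp_add]; ring_nf
    · exact ((aux_int_exp_abs one_pos).const_mul _).div_const _
    · refine ae_of_all _ fun u => ?_
      have h1 : Tendsto (fun t : ℝ => sqrt (m₁^2 + u^2/t)) atTop (nhds m₁) := by
        have h0 : Tendsto (fun t : ℝ => m₁^2 + u^2/t) atTop (nhds (m₁^2 + 0)) :=
          tendsto_const_nhds.add (Tendsto.div_atTop tendsto_const_nhds tendsto_id)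
        rw [add_zero] at h0
        have h2 := (Real.continuous_sqrt.tendsto (m₁^2)).comp h0
        rwa [Real.sqrt_sq hm.le] at h2
      have h2 : Tendsto (fun t : ℝ => -(u^2/(sqrt (m₁^2+u^2/t)+m₁))) atTop
          (nhds (-(u^2/(2*m₁)))) := by
        have h3 : Tendsto (fun t : ℝ => sqrt (m₁^2+u^2/t) + m₁) atTop (nhds (m₁ + m₁)) :=
          h1.add tendsto_const_nhds
        rw [show m₁ + m₁ = 2*m₁ by ring] at h3
        exact (Tendsto.div tendsto_const_nhds h3 hm2.ne').neg
      have h4 : Tendsto (fun t : ℝ => 2 * sqrt (m₁^2+u^2/t)) atTop (nhds (2*m₁)) :=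
        h1.const_mul 2
      exact ((Real.continuous_exp.tendsto _).comp h2).div h4 hm2.ne'
  -- change of variables identity
  have hident : ∀ t : ℝ, 1 ≤ t → g t m₁ / d t
      = ∫ u : ℝ, exp (-(u^2 / (sqrt (m₁^2 + u^2/t) + m₁))) / (2 * sqrt (m₁^2 + u^2/t)) := by
    intro t ht
    have ht0 : (0:ℝ) < t := by linarith
    have hst : 0 < Real.sqrt t := Real.sqrt_pos.mpr ht0
    have hcv := Measure.integral_comp_mul_left
      (fun p : ℝ => exp (-t * sqrt (m₁^2 + p^2)) / (2 * sqrt (m₁^2 + p^2))) ((Real.sqrt t)⁻¹)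
    rw [inv_inv, abs_of_pos hst, smul_eq_mul] at hcv
    have hpt : ∀ u : ℝ, exp (m₁*t) *
        (exp (-t * sqrt (m₁^2 + ((Real.sqrt t)⁻¹*u)^2)) / (2*sqrt (m₁^2+((Real.sqrt t)⁻¹*u)^2)))
        = exp (-(u^2/(sqrt (m₁^2+u^2/t)+m₁))) / (2*sqrt (m₁^2+u^2/t)) := by
      intro u
      have hX : ((Real.sqrt t)⁻¹*u)^2 = u^2/t := by
        rw [mul_pow, inv_pow, Real.sq_sqrt ht0.le]
        ring
      rw [hX, mul_div_assoc', ← Real.exp_add,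
        show m₁*t + -t*sqrt (m₁^2+u^2/t) = -(u^2/(sqrt (m₁^2+u^2/t)+m₁)) from by
          rw [← hkey t ht0 u]; ring]
    have hd' : d t = (Real.sqrt t)⁻¹ * exp (-m₁*t) := by
      simp only [hddef]
      congr 1
      rw [Real.rpow_neg ht0.le, ← Real.sqrt_eq_rpow]
    calc g t m₁ / d t = exp (m₁*t) * (Real.sqrt t * g t m₁) := by
          rw [hd', show -m₁*t = -(m₁*t) by ring, Real.exp_neg]
          field_simp
      _ = exp (m₁*t) * ∫ u : ℝ, exp (-t * sqrt (m₁^2 + ((Real.sqrt t)⁻¹*u)^2))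
            / (2*sqrt (m₁^2+((Real.sqrt t)⁻¹*u)^2)) := by rw [hcv]
      _ = ∫ u : ℝ, exp (m₁*t) * (exp (-t * sqrt (m₁^2 + ((Real.sqrt t)⁻¹*u)^2))
            / (2*sqrt (m₁^2+((Real.sqrt t)⁻¹*u)^2))) := (integral_const_mul _ _).symm
      _ = _ := by simp_rw [hpt]
  -- atom asymptotics
  have hA : Tendsto (fun t => g t m₁ / d t) atTop (nhds (sqrt (π / (2*m₁)))) := by
    rw [← hgauss]
    refine hDCT.congr' ?_
    filter_upwards [eventually_ge_atTop (1:ℝ)] with t ht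
    exact (hident t ht).symm
  -- conclude
  have hfinal : Tendsto (fun t => (ρ {m₁}).toReal * (g t m₁ / d t)
      + (∫ m in Ici (m₁+ε), g t m ∂ρ) / d t) atTop
      (nhds ((ρ {m₁}).toReal * sqrt (π / (2 * m₁)))) := by
    have h := (hA.const_mul (ρ {m₁}).toReal).add hB
    simpa using h
  refine hfinal.congr' ?_
  filter_upwards [eventually_ge_atTop (1:ℝ)] with t ht
  show _ = (∫ m, g t m ∂ρ) / d t
  rw [hsplit t ht, add_div, mul_div_assoc]
end

section
/- Let m₁ > 0 and ε > 0, and let ρ̃ be a Borel measure on the real line supported in [m₁+ε, ∞) with ∫ (1/m) dρ̃(m) < ∞. Then the limit as t → ∞ of t^{1/2} e^{m₁ t} · ∫ ( ∫_{-∞}^{∞} e^{-t√(m²+p²)} / (2√(m²+p²)) dp ) dρ̃(m) exists and equals 0. -/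
open MeasureTheory Filter Real Set

/-- Tail estimate: if `ρ̃` is supported in `[m₁+ε, ∞)` with `∫ (1/m) dρ̃(m) < ∞`, then
`t^{1/2} e^{m₁ t} ∫ (∫ e^{-t√(m²+p²)}/(2√(m²+p²)) dp) dρ̃(m) → 0` as `t → ∞`. -/
theorem stmt7 (m₁ ε : ℝ) (hm : 0 < m₁) (hε : 0 < ε) (ρ : Measure ℝ)
    (hsupp : ρ (Iio (m₁ + ε)) = 0)
    (hfin : ∫⁻ m, ENNReal.ofReal (1 / m) ∂ρ < ⊤) :
    Tendsto (fun t : ℝ =>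
        t ^ ((1:ℝ)/2) * exp (m₁ * t) *
          ∫ m, (∫ p : ℝ, exp (-t * sqrt (m ^ 2 + p ^ 2)) / (2 * sqrt (m ^ 2 + p ^ 2))) ∂ρ)
      atTop (nhds 0) := by
  have hm₁ε : 0 < m₁ + ε := by linarith
  -- integrability of exp(-(|p|/2)) over ℝ
  have hIexp : Integrable (fun p : ℝ => exp (-(|p| / 2))) := by
    have hc : Continuous (fun p : ℝ => exp (-(|p| / 2))) := by continuity
    refine hc.locallyIntegrable.integrable_of_isBigO_atTop_of_norm_isNegInvariant
      (g := fun p : ℝ => exp (-((1:ℝ)/2) * p)) ?_ ?_ ?_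
    · filter_upwards with x
      simp [Function.comp, abs_neg]
    · apply Asymptotics.IsBigO.of_bound 1
      filter_upwards [eventually_ge_atTop (0:ℝ)] with x hx
      rw [abs_of_nonneg hx]
      simp [abs_of_nonneg (exp_pos _).le]
      ring_nf
      simp
    · exact ⟨Ioi 0, Ioi_mem_atTop 0, exp_neg_integrableOn_Ioi 0 (by norm_num)⟩
  set C₀ : ℝ := ∫ p : ℝ, exp (-(|p| / 2)) with hC₀def
  have hC₀ : 0 ≤ C₀ := integral_nonneg fun _ => (exp_pos _).le
  -- a.e. on ρ, m ≥ m₁ + ε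
  have hae : ∀ᵐ m ∂ρ, m₁ + ε ≤ m := by
    rw [ae_iff]
    convert hsupp using 2
    ext m
    simp [not_le]
  -- integrability of 1/m with respect to ρ
  have hmeas : Measurable (fun m : ℝ => 1 / m) := measurable_const.div measurable_id
  have hinv : Integrable (fun m : ℝ => 1 / m) ρ := by
    refine ⟨hmeas.aestronglyMeasurable, ?_⟩
    rw [hasFiniteIntegral_iff_norm]
    calc ∫⁻ m, ENNReal.ofReal ‖1 / m‖ ∂ρ
        = ∫⁻ m, ENNReal.ofReal (1 / m) ∂ρ := by
          refine lintegral_congr_ae (hae.mono fun m hm' => ?_)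
          have hm0 : 0 < m := lt_of_lt_of_le hm₁ε hm'
          show ENNReal.ofReal ‖1 / m‖ = ENNReal.ofReal (1 / m)
          rw [Real.norm_eq_abs, abs_of_nonneg (by positivity)]
      _ < ⊤ := hfin
  set K : ℝ := ∫ m, 1 / m ∂ρ with hKdef
  have hK : 0 ≤ K :=
    integral_nonneg_of_ae (hae.mono fun m hm' => by
      have hm0 : 0 < m := lt_of_lt_of_le hm₁ε hm'
      positivity)
  -- the main estimate for t ≥ 1
  have key : ∀ t : ℝ, 1 ≤ t →
      t ^ ((1:ℝ)/2) * exp (m₁ * t) *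
        ∫ m, (∫ p : ℝ, exp (-t * sqrt (m ^ 2 + p ^ 2)) / (2 * sqrt (m ^ 2 + p ^ 2))) ∂ρ
      ≤ (C₀ * K / 2 * exp (m₁ + ε)) * (t ^ ((1:ℝ)/2) * exp (-ε * t)) := by
    intro t ht
    have ht0 : (0:ℝ) ≤ t := by linarith
    -- inner bound
    have inner : ∀ m : ℝ, m₁ + ε ≤ m →
        (∫ p : ℝ, exp (-t * sqrt (m ^ 2 + p ^ 2)) / (2 * sqrt (m ^ 2 + p ^ 2)))
          ≤ (exp (-(t-1) * (m₁ + ε)) * C₀ / 2) * (1 / m) := by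
      intro m hm'
      have hm0 : 0 < m := lt_of_lt_of_le hm₁ε hm'
      have step : (∫ p : ℝ, exp (-t * sqrt (m ^ 2 + p ^ 2)) / (2 * sqrt (m ^ 2 + p ^ 2)))
          ≤ ∫ p : ℝ, (exp (-(t-1) * (m₁ + ε)) / (2 * m)) * exp (-(|p| / 2)) := by
        refine integral_mono_of_nonneg (Eventually.of_forall fun p => by positivity)
          (hIexp.const_mul _) (Eventually.of_forall fun p => ?_)
        set s := sqrt (m ^ 2 + p ^ 2) with hsdef
        have hs1 : m ≤ s := by
          rw [hsdef]
          nlinarith [Real.sq_sqrt (by positivity : (0:ℝ) ≤ m ^ 2 + p ^ 2),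
            Real.sqrt_nonneg (m ^ 2 + p ^ 2)]
        have hs2 : |p| ≤ s := by
          rw [hsdef, ← Real.sqrt_sq_eq_abs]
          exact Real.sqrt_le_sqrt (by nlinarith)
        have hs0 : 0 < s := lt_of_lt_of_le hm0 hs1
        have hexp : exp (-t * s) ≤ exp (-(t-1) * (m₁ + ε)) * exp (-(|p| / 2)) := by
          rw [← Real.exp_add]
          apply Real.exp_le_exp.2
          have h1 : (t - 1) * (m₁ + ε) ≤ (t - 1) * s := by
            apply mul_le_mul_of_nonneg_left (le_trans hm' hs1) (by linarith)
          nlinarith [abs_nonneg p]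
        calc exp (-t * s) / (2 * s) ≤ (exp (-(t-1) * (m₁ + ε)) * exp (-(|p| / 2))) / (2 * m) := by
              apply div_le_div₀ (by positivity) hexp (by positivity) (by linarith)
          _ = (exp (-(t-1) * (m₁ + ε)) / (2 * m)) * exp (-(|p| / 2)) := by ring
      calc (∫ p : ℝ, exp (-t * sqrt (m ^ 2 + p ^ 2)) / (2 * sqrt (m ^ 2 + p ^ 2)))
          ≤ ∫ p : ℝ, (exp (-(t-1) * (m₁ + ε)) / (2 * m)) * exp (-(|p| / 2)) := step
        _ = (exp (-(t-1) * (m₁ + ε)) / (2 * m)) * C₀ := by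
            rw [integral_const_mul]
        _ = (exp (-(t-1) * (m₁ + ε)) * C₀ / 2) * (1 / m) := by ring
    -- outer bound
    have outer : (∫ m, (∫ p : ℝ, exp (-t * sqrt (m ^ 2 + p ^ 2)) / (2 * sqrt (m ^ 2 + p ^ 2))) ∂ρ)
        ≤ (exp (-(t-1) * (m₁ + ε)) * C₀ / 2) * K := by
      calc (∫ m, (∫ p : ℝ, exp (-t * sqrt (m ^ 2 + p ^ 2)) / (2 * sqrt (m ^ 2 + p ^ 2))) ∂ρ)
          ≤ ∫ m, (exp (-(t-1) * (m₁ + ε)) * C₀ / 2) * (1 / m) ∂ρ := by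
            refine integral_mono_of_nonneg
              (Eventually.of_forall fun m => integral_nonneg fun p => by positivity)
              (hinv.const_mul _) (hae.mono fun m hm' => inner m hm')
        _ = (exp (-(t-1) * (m₁ + ε)) * C₀ / 2) * K := by rw [integral_const_mul]
    have hfac : exp (m₁ * t) * (exp (-(t-1) * (m₁ + ε)) * C₀ / 2 * K)
        = (C₀ * K / 2 * exp (m₁ + ε)) * exp (-ε * t) := by
      have e : exp (m₁ * t) * exp (-(t-1) * (m₁ + ε)) = exp (m₁ + ε) * exp (-ε * t) := by
        rw [← Real.exp_add, ← Real.exp_add]; congr 1; ring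
      linear_combination (C₀ * K / 2) * e
    calc t ^ ((1:ℝ)/2) * exp (m₁ * t) *
          ∫ m, (∫ p : ℝ, exp (-t * sqrt (m ^ 2 + p ^ 2)) / (2 * sqrt (m ^ 2 + p ^ 2))) ∂ρ
        ≤ t ^ ((1:ℝ)/2) * exp (m₁ * t) * ((exp (-(t-1) * (m₁ + ε)) * C₀ / 2) * K) := by
          apply mul_le_mul_of_nonneg_left outer (by positivity)
      _ = t ^ ((1:ℝ)/2) * (exp (m₁ * t) * (exp (-(t-1) * (m₁ + ε)) * C₀ / 2 * K)) := by ring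
      _ = (C₀ * K / 2 * exp (m₁ + ε)) * (t ^ ((1:ℝ)/2) * exp (-ε * t)) := by
          rw [hfac]; ring
  -- conclude by squeezing
  have hnonneg : ∀ t : ℝ, 0 ≤ t →
      0 ≤ t ^ ((1:ℝ)/2) * exp (m₁ * t) *
        ∫ m, (∫ p : ℝ, exp (-t * sqrt (m ^ 2 + p ^ 2)) / (2 * sqrt (m ^ 2 + p ^ 2))) ∂ρ := by
    intro t ht
    have : 0 ≤ ∫ m, (∫ p : ℝ, exp (-t * sqrt (m ^ 2 + p ^ 2)) / (2 * sqrt (m ^ 2 + p ^ 2))) ∂ρ :=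
      integral_nonneg fun m => integral_nonneg fun p => by positivity
    positivity
  have hg : Tendsto (fun t : ℝ => (C₀ * K / 2 * exp (m₁ + ε)) * (t ^ ((1:ℝ)/2) * exp (-ε * t)))
      atTop (nhds 0) := by
    have := (tendsto_rpow_mul_exp_neg_mul_atTop_nhds_zero ((1:ℝ)/2) ε hε).const_mul
      (C₀ * K / 2 * exp (m₁ + ε))
    simpa using this
  refine squeeze_zero' ?_ ?_ hg
  · filter_upwards [eventually_ge_atTop (0:ℝ)] with t ht using hnonneg t ht
  · filter_upwards [eventually_ge_atTop (1:ℝ)] with t ht using key t ht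
end

section
/- Let m > 0, C₃ > 0, and let Ĥ : (0, ∞) → [0, ∞) be a measurable function such that Ĥ(r)/(r^{-1/2} e^{-mr}) → C₃ as r → ∞. Define K(t) = ∫_{-∞}^{∞} Ĥ(√(t²+y²)) dy (a Lebesgue integral with values in [0, ∞], which is finite for all sufficiently large t). Then the limit as t → ∞ of K(t)/e^{-mt} exists and equals C₃ · √(2π/m). -/
open MeasureTheory Filter Real Set

noncomputable def phiAux (m r : ℝ) : ℝ := (Real.sqrt r)⁻¹ * Real.exp (-m * r)

noncomputable def ffAux (m t u : ℝ) : ℝ :=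
  (Real.sqrt (Real.sqrt (1 + u ^ 2 / t)))⁻¹ *
    Real.exp (-m * (u ^ 2 / (Real.sqrt (1 + u ^ 2 / t) + 1)))

lemma sqrt_one_add_ge (u t : ℝ) (ht : 0 < t) : (1:ℝ) ≤ Real.sqrt (1 + u ^ 2 / t) :=
  Real.one_le_sqrt.mpr (le_add_of_nonneg_right (by positivity))

lemma key_identity (m t u : ℝ) (ht : 0 < t) :
    Real.sqrt t * phiAux m (Real.sqrt (t ^ 2 + (Real.sqrt t * u) ^ 2)) =
      Real.exp (-m * t) * ffAux m t u := by
  have htne : t ≠ 0 := ht.ne'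
  set s := Real.sqrt (1 + u ^ 2 / t) with hs
  have hs1 : (1:ℝ) ≤ s := sqrt_one_add_ge u t ht
  have hs0 : 0 < s := lt_of_lt_of_le one_pos hs1
  have hssq : s ^ 2 = 1 + u ^ 2 / t := Real.sq_sqrt (by positivity)
  have ht2 : t * s ^ 2 = t + u ^ 2 := by rw [hssq]; field_simp
  have h1 : t ^ 2 + (Real.sqrt t * u) ^ 2 = t ^ 2 * (1 + u ^ 2 / t) := by
    rw [mul_pow, Real.sq_sqrt ht.le]; field_simp
  have h2 : Real.sqrt (t ^ 2 + (Real.sqrt t * u) ^ 2) = t * s := by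
    rw [h1, Real.sqrt_mul (by positivity), Real.sqrt_sq ht.le]
  have h3 : t * s = t + u ^ 2 / (s + 1) := by
    have hne : s + 1 ≠ 0 := by positivity
    field_simp
    linear_combination ht2
  rw [h2, phiAux, h3]
  have h4 : Real.sqrt (t + u ^ 2 / (s + 1)) = Real.sqrt t * Real.sqrt s := by
    rw [← h3, Real.sqrt_mul ht.le]
  have h5 : -m * (t + u ^ 2 / (s + 1)) = -m * t + -m * (u ^ 2 / (s + 1)) := by ring
  rw [h4, h5, Real.exp_add]
  unfold ffAux
  rw [← hs]
  have hst : Real.sqrt t ≠ 0 := by positivity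
  have hss : Real.sqrt s ≠ 0 := by positivity
  field_simp

lemma g_continuous (m t : ℝ) (ht : 1 ≤ t) :
    Continuous (fun y : ℝ => phiAux m (Real.sqrt (t ^ 2 + y ^ 2))) := by
  have hc : Continuous fun y : ℝ => t ^ 2 + y ^ 2 := by continuity
  have hge : ∀ y : ℝ, (1:ℝ) ≤ t ^ 2 + y ^ 2 := by
    intro y; nlinarith [sq_nonneg y]
  have hne : ∀ y : ℝ, Real.sqrt (Real.sqrt (t ^ 2 + y ^ 2)) ≠ 0 := by
    intro y
    have h1 : (1:ℝ) ≤ Real.sqrt (t ^ 2 + y ^ 2) := Real.one_le_sqrt.mpr (hge y)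
    positivity
  unfold phiAux
  exact (hc.sqrt.sqrt.inv₀ hne).mul
    (Real.continuous_exp.comp (continuous_const.mul hc.sqrt))

lemma g_le_bound (m t y : ℝ) (hm : 0 < m) (ht : 1 ≤ t) :
    phiAux m (Real.sqrt (t ^ 2 + y ^ 2)) ≤ Real.exp (-m * |y|) := by
  have h1 : (1:ℝ) ≤ Real.sqrt (t ^ 2 + y ^ 2) :=
    Real.one_le_sqrt.mpr (by nlinarith [sq_nonneg y])
  have h2 : |y| ≤ Real.sqrt (t ^ 2 + y ^ 2) := by
    rw [← Real.sqrt_sq_eq_abs]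
    apply Real.sqrt_le_sqrt
    nlinarith [sq_nonneg t]
  have hinv : (Real.sqrt (Real.sqrt (t ^ 2 + y ^ 2)))⁻¹ ≤ 1 := by
    rw [inv_le_one_iff₀]; right; exact Real.one_le_sqrt.mpr h1
  calc phiAux m (Real.sqrt (t ^ 2 + y ^ 2))
      ≤ 1 * Real.exp (-m * Real.sqrt (t ^ 2 + y ^ 2)) :=
        mul_le_mul_of_nonneg_right hinv (Real.exp_nonneg _)
    _ ≤ Real.exp (-m * |y|) := by
        rw [one_mul]
        apply Real.exp_le_exp.mpr
        nlinarith [h2]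

lemma integrable_exp_neg_abs {m : ℝ} (hm : 0 < m) :
    Integrable (fun x : ℝ => Real.exp (-m * |x|)) := by
  have h1 : IntegrableOn (fun x : ℝ => Real.exp (-m * |x|)) (Ioi 0) := by
    refine (exp_neg_integrableOn_Ioi 0 hm).congr_fun (fun x hx => by rw [abs_of_pos hx]) measurableSet_Ioi
  have h2 : IntegrableOn (fun x : ℝ => Real.exp (-m * |x|)) (Iic 0) := by
    have hmap : Measure.map Neg.neg (volume.restrict (Ioi (0:ℝ))) = volume.restrict (Iio 0) := by
      conv_rhs => rw [← Measure.map_neg_eq_self (volume : Measure ℝ)]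
      rw [measurableEmbedding_neg.restrict_map]
      simp
    have h3 : IntegrableOn (fun x : ℝ => Real.exp (-m * |x|)) (Iio 0) := by
      rw [IntegrableOn, ← hmap, measurableEmbedding_neg.integrable_map_iff]
      refine h1.congr_fun (fun x hx => ?_) measurableSet_Ioi
      simp [Function.comp, abs_neg]
    rw [show (Iic (0:ℝ)) = Iio 0 ∪ {0} by simp [Set.union_comm, Set.Iio_union_right]]
    exact h3.union ((integrableOn_singleton_iff).mpr (Or.inr (by simp)))
  have := h2.union h1
  rwa [Set.Iic_union_Ioi, integrableOn_univ] at this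

lemma g_integrable (m t : ℝ) (hm : 0 < m) (ht : 1 ≤ t) :
    Integrable (fun y : ℝ => phiAux m (Real.sqrt (t ^ 2 + y ^ 2))) := by
  refine Integrable.mono (integrable_exp_neg_abs hm) (g_continuous m t ht).aestronglyMeasurable ?_
  filter_upwards with y
  rw [Real.norm_eq_abs, Real.norm_eq_abs, abs_of_nonneg (Real.exp_nonneg _),
    abs_of_nonneg (by unfold phiAux; positivity)]
  exact g_le_bound m t y hm ht

lemma change_of_var (m t : ℝ) (hm : 0 < m) (ht : 1 ≤ t) :
    ∫ y : ℝ, phiAux m (Real.sqrt (t ^ 2 + y ^ 2)) =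
      Real.exp (-m * t) * ∫ u : ℝ, ffAux m t u := by
  have ht0 : (0:ℝ) < t := lt_of_lt_of_le one_pos ht
  have hst : (0:ℝ) < Real.sqrt t := Real.sqrt_pos.mpr ht0
  have hcv := MeasureTheory.Measure.integral_comp_mul_left
    (fun y => phiAux m (Real.sqrt (t ^ 2 + y ^ 2))) (Real.sqrt t)
  rw [abs_of_nonneg (inv_nonneg.mpr hst.le), smul_eq_mul] at hcv
  have h2 : ∫ y : ℝ, phiAux m (Real.sqrt (t ^ 2 + y ^ 2)) =
      Real.sqrt t * ∫ x : ℝ, phiAux m (Real.sqrt (t ^ 2 + (Real.sqrt t * x) ^ 2)) := by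
    rw [hcv]
    field_simp
  rw [h2, ← integral_const_mul]
  have h3 : ∀ x : ℝ, Real.sqrt t * phiAux m (Real.sqrt (t ^ 2 + (Real.sqrt t * x) ^ 2)) =
      Real.exp (-m * t) * ffAux m t x := fun x => key_identity m t x ht0
  simp_rw [h3]
  rw [integral_const_mul]

lemma ffAux_nonneg (m t u : ℝ) : 0 ≤ ffAux m t u := by
  unfold ffAux; positivity
lemma ffAux_continuous (m t : ℝ) (ht : 0 < t) : Continuous (ffAux m t) := by
  have h1 : Continuous fun u : ℝ => 1 + u ^ 2 / t := by continuity
  have h2 : ∀ u : ℝ, Real.sqrt (Real.sqrt (1 + u ^ 2 / t)) ≠ 0 := by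
    intro u
    have := sqrt_one_add_ge u t ht
    positivity
  have h3 : ∀ u : ℝ, Real.sqrt (1 + u ^ 2 / t) + 1 ≠ 0 := by
    intro u
    have := sqrt_one_add_ge u t ht
    positivity
  exact (h1.sqrt.sqrt.inv₀ h2).mul
    (Real.continuous_exp.comp (continuous_const.mul
      ((continuous_pow 2).div (h1.sqrt.add continuous_const) h3)))

lemma ffAux_le_bound (m t u : ℝ) (hm : 0 < m) (ht : 1 ≤ t) :
    ffAux m t u ≤ Real.exp (-m * (Real.sqrt (1 + u ^ 2) - 1)) := by
  have ht0 : (0:ℝ) < t := lt_of_lt_of_le one_pos ht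
  have hs1 : (1:ℝ) ≤ Real.sqrt (1 + u ^ 2 / t) := sqrt_one_add_ge u t ht0
  have hinv : (Real.sqrt (Real.sqrt (1 + u ^ 2 / t)))⁻¹ ≤ 1 := by
    rw [inv_le_one_iff₀]
    right
    exact Real.one_le_sqrt.mpr hs1
  have hle : Real.sqrt (1 + u ^ 2 / t) ≤ Real.sqrt (1 + u ^ 2) := by
    apply Real.sqrt_le_sqrt
    have : u ^ 2 / t ≤ u ^ 2 := by
      rw [div_le_iff₀ ht0]
      nlinarith [sq_nonneg u]
    linarith
  have hid : Real.sqrt (1 + u ^ 2) - 1 = u ^ 2 / (Real.sqrt (1 + u ^ 2) + 1) := by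
    have hpos : (0:ℝ) < Real.sqrt (1 + u ^ 2) + 1 := by positivity
    have hsq : Real.sqrt (1 + u ^ 2) ^ 2 = 1 + u ^ 2 := Real.sq_sqrt (by positivity)
    field_simp
    nlinarith [hsq]
  have hnum : Real.sqrt (1 + u ^ 2) - 1 ≤ u ^ 2 / (Real.sqrt (1 + u ^ 2 / t) + 1) := by
    rw [hid]
    apply div_le_div_of_nonneg_left (sq_nonneg u) (by positivity)
    linarith
  calc ffAux m t u ≤ 1 * Real.exp (-m * (u ^ 2 / (Real.sqrt (1 + u ^ 2 / t) + 1))) := by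
        apply mul_le_mul_of_nonneg_right hinv (Real.exp_nonneg _)
    _ ≤ Real.exp (-m * (Real.sqrt (1 + u ^ 2) - 1)) := by
        rw [one_mul]
        apply Real.exp_le_exp.mpr
        nlinarith [hnum]

lemma bound_integrable {m : ℝ} (hm : 0 < m) :
    Integrable (fun u : ℝ => Real.exp (-m * (Real.sqrt (1 + u ^ 2) - 1))) := by
  refine Integrable.mono ((integrable_exp_neg_abs hm).const_mul (Real.exp m)) ?_ ?_
  · exact (Real.continuous_exp.comp (continuous_const.mul
      (((continuous_const.add (continuous_pow 2)).sqrt).sub continuous_const))).aestronglyMeasurable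
  · filter_upwards with u
    rw [Real.norm_eq_abs, Real.norm_eq_abs, abs_of_nonneg (Real.exp_nonneg _),
      abs_of_nonneg (by positivity)]
    rw [← Real.exp_add]
    apply Real.exp_le_exp.mpr
    have : |u| ≤ Real.sqrt (1 + u ^ 2) := by
      rw [← Real.sqrt_sq_eq_abs]
      apply Real.sqrt_le_sqrt
      linarith
    nlinarith [this]

lemma ffAux_tendsto_integral {m : ℝ} (hm : 0 < m) :
    Tendsto (fun t => ∫ u : ℝ, ffAux m t u) atTop (nhds (Real.sqrt (2 * π / m))) := by
  have key : Tendsto (fun t => ∫ u : ℝ, ffAux m t u) atTop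
      (nhds (∫ u : ℝ, Real.exp (-(m/2) * u ^ 2))) := by
    apply tendsto_integral_filter_of_dominated_convergence
      (fun u => Real.exp (-m * (Real.sqrt (1 + u ^ 2) - 1)))
    · filter_upwards [eventually_ge_atTop (1:ℝ)] with t ht
      exact (ffAux_continuous m t (lt_of_lt_of_le one_pos ht)).aestronglyMeasurable
    · filter_upwards [eventually_ge_atTop (1:ℝ)] with t ht
      filter_upwards with u
      rw [Real.norm_eq_abs, abs_of_nonneg (by unfold ffAux; positivity)]
      exact ffAux_le_bound m t u hm ht
    · exact bound_integrable hm
    · filter_upwards with u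
      have hdiv : Tendsto (fun t : ℝ => u ^ 2 / t) atTop (nhds 0) :=
        Tendsto.div_atTop tendsto_const_nhds tendsto_id
      have hG : ContinuousAt (fun x : ℝ =>
          (Real.sqrt (Real.sqrt (1 + x)))⁻¹ *
            Real.exp (-m * (u ^ 2 / (Real.sqrt (1 + x) + 1)))) 0 := by
        have c1 : ContinuousAt (fun x : ℝ => Real.sqrt (1 + x)) 0 :=
          (Real.continuous_sqrt.comp (continuous_const.add continuous_id)).continuousAt
        have c2 : ContinuousAt (fun x : ℝ => Real.sqrt (Real.sqrt (1 + x))) 0 :=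
          Real.continuous_sqrt.continuousAt.comp c1
        refine ContinuousAt.mul (c2.inv₀ ?_) ?_
        · simp [Real.sqrt_one]
        · refine Real.continuous_exp.continuousAt.comp ?_
          refine ContinuousAt.mul continuousAt_const ?_
          refine ContinuousAt.div continuousAt_const (c1.add continuousAt_const) ?_
          simp [Real.sqrt_one]
      have hcomp := hG.tendsto.comp hdiv
      simp only [Function.comp_def] at hcomp
      have hval : (Real.sqrt (Real.sqrt ((1:ℝ) + 0)))⁻¹ *
          Real.exp (-m * (u ^ 2 / (Real.sqrt ((1:ℝ) + 0) + 1))) =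
          Real.exp (-(m / 2) * u ^ 2) := by
        norm_num [Real.sqrt_one]
        ring_nf
      rw [hval] at hcomp
      exact hcomp
  convert key using 2
  rw [integral_gaussian (m/2)]
  congr 1
  field_simp


/-- Proposition (large-time behavior of `K`): if `Ĥ : (0,∞) → [0,∞)` is measurable with
`Ĥ(r)/(r^{-1/2} e^{-mr}) → C₃`, then `K(t) = ∫_{-∞}^∞ Ĥ(√(t²+y²)) dy` (a `[0,∞]`-valued
Lebesgue integral) is finite for all sufficiently large `t`, and
`K(t)/e^{-mt} → C₃ √(2π/m)` as `t → ∞`. -/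
theorem stmt8 (m C₃ : ℝ) (hm : 0 < m) (hC : 0 < C₃) (H : ℝ → ℝ)
    (hmeas : Measurable H) (hnonneg : ∀ r : ℝ, 0 < r → 0 ≤ H r)
    (hasymp : Tendsto (fun r : ℝ => H r / (r ^ (-(1/2) : ℝ) * exp (-m * r)))
      atTop (nhds C₃)) :
    (∀ᶠ t : ℝ in atTop,
        (∫⁻ y : ℝ, ENNReal.ofReal (H (sqrt (t ^ 2 + y ^ 2)))) ≠ ⊤) ∧
    Tendsto (fun t : ℝ =>
        (∫⁻ y : ℝ, ENNReal.ofReal (H (sqrt (t ^ 2 + y ^ 2)))).toReal / exp (-m * t))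
      atTop (nhds (C₃ * sqrt (2 * π / m))) := by
  set L := Real.sqrt (2 * π / m) with hLdef
  have hL0 : 0 ≤ L := Real.sqrt_nonneg _
  set J : ℝ → ℝ := fun t => ∫ u : ℝ, ffAux m t u with hJdef
  have hJlim : Tendsto J atTop (nhds L) := ffAux_tendsto_integral hm
  have hJ0 : ∀ t, 0 ≤ J t := fun t => integral_nonneg fun u => ffAux_nonneg m t u
  have hphi_eq : ∀ r : ℝ, 0 < r →
      r ^ (-(1/2) : ℝ) * Real.exp (-m * r) = phiAux m r := by
    intro r hr
    rw [phiAux, Real.rpow_neg hr.le, ← Real.sqrt_eq_rpow]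
  have hphi_pos : ∀ r : ℝ, 0 < r → 0 < phiAux m r := by
    intro r hr; rw [phiAux]; positivity
  have key : ∀ ε : ℝ, 0 < ε → ε ≤ C₃ → ∀ᶠ t : ℝ in atTop,
      ((∫⁻ y : ℝ, ENNReal.ofReal (H (sqrt (t ^ 2 + y ^ 2)))) ≠ ⊤ ∧
       (C₃ - ε) * J t ≤
          (∫⁻ y : ℝ, ENNReal.ofReal (H (sqrt (t ^ 2 + y ^ 2)))).toReal / exp (-m * t) ∧
       (∫⁻ y : ℝ, ENNReal.ofReal (H (sqrt (t ^ 2 + y ^ 2)))).toReal / exp (-m * t) ≤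
          (C₃ + ε) * J t) := by
    intro ε hε hεC
    have hev : ∀ᶠ r : ℝ in atTop,
        |H r / (r ^ (-(1/2) : ℝ) * exp (-m * r)) - C₃| < ε := by
      have := Metric.tendsto_nhds.mp hasymp ε hε
      filter_upwards [this] with r hr
      rwa [Real.dist_eq] at hr
    obtain ⟨R, hR⟩ := eventually_atTop.mp hev
    filter_upwards [eventually_ge_atTop (max R 1)] with t htt
    have ht1 : (1:ℝ) ≤ t := le_trans (le_max_right R 1) htt
    have htR : R ≤ t := le_trans (le_max_left R 1) htt
    have ht0 : (0:ℝ) < t := lt_of_lt_of_le one_pos ht1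
    have hexp : (0:ℝ) < exp (-m * t) := Real.exp_pos _
    -- pointwise bounds
    have hbnd : ∀ y : ℝ,
        (C₃ - ε) * phiAux m (sqrt (t ^ 2 + y ^ 2)) ≤ H (sqrt (t ^ 2 + y ^ 2)) ∧
        H (sqrt (t ^ 2 + y ^ 2)) ≤ (C₃ + ε) * phiAux m (sqrt (t ^ 2 + y ^ 2)) := by
      intro y
      set r := sqrt (t ^ 2 + y ^ 2) with hrdef
      have hrt : t ≤ r := by
        calc t = sqrt (t ^ 2) := (Real.sqrt_sq ht0.le).symm
          _ ≤ r := Real.sqrt_le_sqrt (by nlinarith [sq_nonneg y])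
      have hr0 : (0:ℝ) < r := lt_of_lt_of_le ht0 hrt
      have h := hR r (le_trans htR hrt)
      rw [hphi_eq r hr0] at h
      have hp := hphi_pos r hr0
      rw [abs_lt] at h
      have hlow : C₃ - ε < H r / phiAux m r := by linarith [h.1]
      have hhigh : H r / phiAux m r < C₃ + ε := by linarith [h.2]
      constructor
      · calc (C₃ - ε) * phiAux m r ≤ (H r / phiAux m r) * phiAux m r :=
              mul_le_mul_of_nonneg_right hlow.le hp.le
          _ = H r := div_mul_cancel₀ _ hp.ne'
      · calc H r = (H r / phiAux m r) * phiAux m r := (div_mul_cancel₀ _ hp.ne').symm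
          _ ≤ (C₃ + ε) * phiAux m r := mul_le_mul_of_nonneg_right hhigh.le hp.le
    have hgint : Integrable (fun y : ℝ => phiAux m (sqrt (t ^ 2 + y ^ 2))) :=
      g_integrable m t hm ht1
    have hgnn : ∀ y : ℝ, 0 ≤ phiAux m (sqrt (t ^ 2 + y ^ 2)) := by
      intro y; rw [phiAux]; positivity
    have hIeq : ∫ y : ℝ, phiAux m (sqrt (t ^ 2 + y ^ 2)) = exp (-m * t) * J t :=
      change_of_var m t hm ht1
    have hInn : 0 ≤ ∫ y : ℝ, phiAux m (sqrt (t ^ 2 + y ^ 2)) :=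
      integral_nonneg hgnn
    -- upper bound
    have hub : (∫⁻ y : ℝ, ENNReal.ofReal (H (sqrt (t ^ 2 + y ^ 2)))) ≤
        ENNReal.ofReal ((C₃ + ε) * ∫ y : ℝ, phiAux m (sqrt (t ^ 2 + y ^ 2))) := by
      calc (∫⁻ y : ℝ, ENNReal.ofReal (H (sqrt (t ^ 2 + y ^ 2))))
          ≤ ∫⁻ y : ℝ, ENNReal.ofReal ((C₃ + ε) * phiAux m (sqrt (t ^ 2 + y ^ 2))) :=
            lintegral_mono fun y => ENNReal.ofReal_le_ofReal (hbnd y).2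
        _ = ENNReal.ofReal (∫ y : ℝ, (C₃ + ε) * phiAux m (sqrt (t ^ 2 + y ^ 2))) :=
            (ofReal_integral_eq_lintegral_ofReal (hgint.const_mul _)
              (Filter.Eventually.of_forall fun y =>
                mul_nonneg (by linarith) (hgnn y))).symm
        _ = ENNReal.ofReal ((C₃ + ε) * ∫ y : ℝ, phiAux m (sqrt (t ^ 2 + y ^ 2))) := by
            rw [integral_const_mul]
    have hlb : ENNReal.ofReal ((C₃ - ε) * ∫ y : ℝ, phiAux m (sqrt (t ^ 2 + y ^ 2))) ≤
        ∫⁻ y : ℝ, ENNReal.ofReal (H (sqrt (t ^ 2 + y ^ 2))) := by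
      calc ENNReal.ofReal ((C₃ - ε) * ∫ y : ℝ, phiAux m (sqrt (t ^ 2 + y ^ 2)))
          = ENNReal.ofReal (∫ y : ℝ, (C₃ - ε) * phiAux m (sqrt (t ^ 2 + y ^ 2))) := by
            rw [integral_const_mul]
        _ = ∫⁻ y : ℝ, ENNReal.ofReal ((C₃ - ε) * phiAux m (sqrt (t ^ 2 + y ^ 2))) :=
            ofReal_integral_eq_lintegral_ofReal (hgint.const_mul _)
              (Filter.Eventually.of_forall fun y =>
                mul_nonneg (by linarith) (hgnn y))
        _ ≤ ∫⁻ y : ℝ, ENNReal.ofReal (H (sqrt (t ^ 2 + y ^ 2))) :=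
            lintegral_mono fun y => ENNReal.ofReal_le_ofReal (hbnd y).1
    have hfin : (∫⁻ y : ℝ, ENNReal.ofReal (H (sqrt (t ^ 2 + y ^ 2)))) ≠ ⊤ :=
      ne_top_of_le_ne_top ENNReal.ofReal_ne_top hub
    refine ⟨hfin, ?_, ?_⟩
    · have h1 := ENNReal.toReal_mono hfin hlb
      rw [ENNReal.toReal_ofReal (mul_nonneg (by linarith) hInn)] at h1
      rw [hIeq] at h1
      rw [le_div_iff₀ hexp]
      calc (C₃ - ε) * J t * exp (-m * t) = (C₃ - ε) * (exp (-m * t) * J t) := by ring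
        _ ≤ _ := h1
    · have h1 := ENNReal.toReal_mono ENNReal.ofReal_ne_top hub
      rw [ENNReal.toReal_ofReal (mul_nonneg (by linarith) hInn)] at h1
      rw [hIeq] at h1
      rw [div_le_iff₀ hexp]
      calc (∫⁻ y : ℝ, ENNReal.ofReal (H (sqrt (t ^ 2 + y ^ 2)))).toReal
          ≤ (C₃ + ε) * (exp (-m * t) * J t) := h1
        _ = (C₃ + ε) * J t * exp (-m * t) := by ring
  constructor
  · filter_upwards [key C₃ hC le_rfl] with t ht
    exact ht.1
  · rw [Metric.tendsto_nhds]
    intro δ hδ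
    have hL1 : (0:ℝ) < L + 1 := by linarith
    set ε := min (δ / (2 * (L + 1))) C₃ with hεdef
    have hε0 : 0 < ε := lt_min (by positivity) hC
    have hεC : ε ≤ C₃ := min_le_right _ _
    have hε1 : ε * (L + 1) ≤ δ / 2 := by
      have h := min_le_left (δ / (2 * (L + 1))) C₃
      calc ε * (L + 1) ≤ δ / (2 * (L + 1)) * (L + 1) :=
            mul_le_mul_of_nonneg_right h hL1.le
        _ = δ / 2 := by field_simp
    have hJev1 := Metric.tendsto_nhds.mp hJlim (δ / (2 * C₃)) (by positivity)
    have hJev2 := Metric.tendsto_nhds.mp hJlim 1 one_pos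
    filter_upwards [key ε hε0 hεC, hJev1, hJev2] with t hk h1 h2
    obtain ⟨hfin, hlb, hub⟩ := hk
    rw [Real.dist_eq] at h1 h2 ⊢
    have hJt1 : J t ≤ L + 1 := by
      have := abs_lt.mp h2
      linarith [this.2]
    have e1 : (C₃ - ε) * J t = C₃ * J t - ε * J t := by ring
    have e2 : (C₃ + ε) * J t = C₃ * J t + ε * J t := by ring
    set Kt := (∫⁻ y : ℝ, ENNReal.ofReal (H (sqrt (t ^ 2 + y ^ 2)))).toReal / exp (-m * t)
    have h3 : |Kt - C₃ * J t| ≤ ε * J t := by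
      rw [abs_le]
      constructor
      · rw [e1] at hlb; linarith
      · rw [e2] at hub; linarith
    have h4 : C₃ * |J t - L| < δ / 2 := by
      calc C₃ * |J t - L| < C₃ * (δ / (2 * C₃)) := mul_lt_mul_of_pos_left h1 hC
        _ = δ / 2 := by field_simp
    have h5 : ε * J t ≤ δ / 2 := by
      calc ε * J t ≤ ε * (L + 1) := mul_le_mul_of_nonneg_left hJt1 hε0.le
        _ ≤ δ / 2 := hε1
    calc |Kt - C₃ * L| ≤ |Kt - C₃ * J t| + |C₃ * J t - C₃ * L| := abs_sub_le _ _ _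
      _ = |Kt - C₃ * J t| + C₃ * |J t - L| := by
          rw [← mul_sub, abs_mul, abs_of_pos hC]
      _ < δ / 2 + δ / 2 := by
          apply add_lt_add_of_le_of_lt (le_trans h3 h5) h4
      _ = δ := by ring
end

section
/- Let m > 0, 0 < β < 1/2, and t ≥ 1. Then ∫_0^{t^β} (u² + t²)^{-1/4} e^{-m√(u²+t²)} du ≤ t^{β − 1/2} e^{m} e^{-mt}. -/
open MeasureTheory Filter Real Set

/-- For `m > 0`, `0 < β < 1/2` and `t ≥ 1`:
`∫_0^{t^β} (u² + t²)^{-1/4} e^{-m√(u²+t²)} du ≤ t^{β−1/2} e^{m} e^{-mt}`. -/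
theorem stmt10 (m β t : ℝ) (hm : 0 < m) (hβ : 0 < β) (hβhalf : β < 1/2) (ht : 1 ≤ t) :
    (∫ u in Ioo (0:ℝ) (t ^ β), (u ^ 2 + t ^ 2) ^ (-(1/4) : ℝ) * exp (-m * sqrt (u ^ 2 + t ^ 2)))
      ≤ t ^ (β - 1/2) * exp m * exp (-m * t) := by
  have ht0 : (0:ℝ) < t := lt_of_lt_of_le one_pos ht
  have ht2 : (0:ℝ) < t ^ 2 := by positivity
  set C : ℝ := t ^ (-(1/2) : ℝ) * exp (-m * t) with hC
  have hpos : ∀ u : ℝ, (0:ℝ) < u ^ 2 + t ^ 2 := fun u => by positivity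
  have hcont : Continuous fun u : ℝ =>
      (u ^ 2 + t ^ 2) ^ (-(1/4) : ℝ) * exp (-m * sqrt (u ^ 2 + t ^ 2)) := by
    apply Continuous.mul
    · exact Continuous.rpow_const (by continuity) (fun u => Or.inl (hpos u).ne')
    · exact Real.continuous_exp.comp (by fun_prop)
  have hint : IntegrableOn (fun u : ℝ =>
      (u ^ 2 + t ^ 2) ^ (-(1/4) : ℝ) * exp (-m * sqrt (u ^ 2 + t ^ 2)))
      (Ioo (0:ℝ) (t ^ β)) volume :=
    (hcont.integrableOn_Icc (a := 0) (b := t ^ β)).mono_set Ioo_subset_Icc_self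
  have hbound : ∀ u ∈ Ioo (0:ℝ) (t ^ β),
      (u ^ 2 + t ^ 2) ^ (-(1/4) : ℝ) * exp (-m * sqrt (u ^ 2 + t ^ 2)) ≤ C := by
    intro u _
    have h1 : (u ^ 2 + t ^ 2) ^ (-(1/4) : ℝ) ≤ t ^ (-(1/2) : ℝ) := by
      have hle : t ^ 2 ≤ u ^ 2 + t ^ 2 := by nlinarith [sq_nonneg u]
      have := Real.rpow_le_rpow_of_nonpos ht2 hle (by norm_num : (-(1/4):ℝ) ≤ 0)
      calc (u ^ 2 + t ^ 2) ^ (-(1/4) : ℝ) ≤ (t ^ 2) ^ (-(1/4) : ℝ) := this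
        _ = t ^ (-(1/2) : ℝ) := by
            rw [← Real.rpow_natCast t 2, ← Real.rpow_mul ht0.le]; norm_num
    have h2 : exp (-m * sqrt (u ^ 2 + t ^ 2)) ≤ exp (-m * t) := by
      apply Real.exp_le_exp.mpr
      have : t ≤ sqrt (u ^ 2 + t ^ 2) := by
        nlinarith [Real.sq_sqrt (hpos u).le, Real.sqrt_nonneg (u ^ 2 + t ^ 2), sq_nonneg u,
          sq_nonneg (sqrt (u ^ 2 + t ^ 2) - t)]
      nlinarith
    calc (u ^ 2 + t ^ 2) ^ (-(1/4) : ℝ) * exp (-m * sqrt (u ^ 2 + t ^ 2))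
        ≤ t ^ (-(1/2) : ℝ) * exp (-m * t) := by
          apply mul_le_mul h1 h2 (Real.exp_pos _).le (Real.rpow_nonneg ht0.le _)
      _ = C := rfl
  have htβ : (0:ℝ) < t ^ β := Real.rpow_pos_of_pos ht0 β
  have hmeas : (volume (Ioo (0:ℝ) (t ^ β))).toReal = t ^ β := by
    rw [Real.volume_Ioo]
    simp [ENNReal.toReal_ofReal htβ.le]
  calc (∫ u in Ioo (0:ℝ) (t ^ β),
      (u ^ 2 + t ^ 2) ^ (-(1/4) : ℝ) * exp (-m * sqrt (u ^ 2 + t ^ 2)))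
      ≤ ∫ _ in Ioo (0:ℝ) (t ^ β), C := by
        apply setIntegral_mono_on hint ((integrableOn_const_iff).mpr (Or.inr (by
          rw [Real.volume_Ioo]; exact ENNReal.ofReal_lt_top))) measurableSet_Ioo hbound
    _ = t ^ β * C := by rw [setIntegral_const, smul_eq_mul, measureReal_def, hmeas]
    _ = t ^ (β - 1/2) * exp (-m * t) := by
        rw [hC, show β - 1/2 = β + (-(1/2)) by ring, Real.rpow_add ht0]; ring
    _ ≤ t ^ (β - 1/2) * exp m * exp (-m * t) := by
        have h1 : (1:ℝ) ≤ exp m := Real.one_le_exp hm.le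
        nlinarith [Real.rpow_nonneg ht0.le (β - 1/2), Real.exp_pos (-m * t),
          Real.rpow_nonneg ht0.le (β - 1/2), mul_nonneg (Real.rpow_nonneg ht0.le (β - 1/2)) (Real.exp_pos (-m*t)).le]
end

section
/- Let m > 0, α > 1/2, and t ≥ 1. Then ∫_{t^α}^{∞} (u² + t²)^{-1/4} e^{-m√(u²+t²)} du ≤ (e^{m}/m) e^{-m t^{α − 1/2}} e^{-mt}. -/
open MeasureTheory Filter Real Set

/-- Key pointwise square inequality. -/
lemma sqrt_lower (t u : ℝ) (ht : 1 ≤ t) (hu : 0 ≤ u) :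
    u / Real.sqrt t + (t - 1) ≤ Real.sqrt (u ^ 2 + t ^ 2) := by
  have ht0 : (0:ℝ) < t := lt_of_lt_of_le one_pos ht
  have hs : 0 < Real.sqrt t := Real.sqrt_pos.2 ht0
  have hst : Real.sqrt t ^ 2 = t := Real.sq_sqrt ht0.le
  set v := u / Real.sqrt t with hv
  have hv0 : 0 ≤ v := div_nonneg hu hs.le
  have huv : u = v * Real.sqrt t := by rw [hv, div_mul_cancel₀ _ hs.ne']
  have hrhs0 : 0 ≤ v + (t - 1) := by linarith
  rw [show u / Real.sqrt t + (t - 1) = v + (t - 1) from rfl, huv, Real.le_sqrt hrhs0]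
  · nlinarith [sq_nonneg (v - 1), hst, mul_nonneg (sub_nonneg.2 ht) (sq_nonneg (v - 1))]
  · positivity

/-- For `m > 0`, `α > 1/2` and `t ≥ 1`:
`∫_{t^α}^∞ (u² + t²)^{-1/4} e^{-m√(u²+t²)} du ≤ (e^m/m) e^{-m t^{α−1/2}} e^{-mt}`. -/
theorem stmt11 (m α t : ℝ) (hm : 0 < m) (hα : 1/2 < α) (ht : 1 ≤ t) :
    (∫ u in Ioi (t ^ α), (u ^ 2 + t ^ 2) ^ (-(1/4) : ℝ) * exp (-m * sqrt (u ^ 2 + t ^ 2)))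
      ≤ (exp m / m) * exp (-m * t ^ (α - 1/2)) * exp (-m * t) := by
  have ht0 : (0:ℝ) < t := lt_of_lt_of_le one_pos ht
  have hs : 0 < Real.sqrt t := Real.sqrt_pos.2 ht0
  have hst : Real.sqrt t ^ 2 = t := Real.sq_sqrt ht0.le
  set a := t ^ α with ha
  have ha0 : 0 < a := Real.rpow_pos_of_pos ht0 α
  set b := m / Real.sqrt t with hb
  have hb0 : 0 < b := div_pos hm hs
  set g : ℝ → ℝ := fun u => (Real.sqrt t)⁻¹ * Real.exp (-(m * (t - 1))) * Real.exp (-b * u)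
    with hg
  have hgint : IntegrableOn g (Ioi a) :=
    ((exp_neg_integrableOn_Ioi a hb0).const_mul _)
  have hmono : ∀ u ∈ Ioi a, (u ^ 2 + t ^ 2) ^ (-(1/4) : ℝ) * exp (-m * sqrt (u ^ 2 + t ^ 2))
      ≤ g u := by
    intro u hu
    have hu0 : 0 ≤ u := le_of_lt (lt_of_le_of_lt ha0.le hu)
    have h1 : (u ^ 2 + t ^ 2) ^ (-(1/4) : ℝ) ≤ (Real.sqrt t)⁻¹ := by
      have ht2 : (0:ℝ) < t ^ 2 := by positivity
      have hle : t ^ 2 ≤ u ^ 2 + t ^ 2 := by nlinarith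
      have h := Real.rpow_le_rpow_of_nonpos ht2 hle (by norm_num : (-(1/4):ℝ) ≤ 0)
      refine h.trans_eq ?_
      rw [← Real.rpow_natCast t 2, ← Real.rpow_mul ht0.le]
      norm_num
      rw [Real.rpow_neg ht0.le, ← Real.sqrt_eq_rpow]
    have h2 : exp (-m * sqrt (u ^ 2 + t ^ 2)) ≤ Real.exp (-(m * (t-1))) * Real.exp (-b * u) := by
      rw [← Real.exp_add]
      apply Real.exp_le_exp.2
      have hkey := sqrt_lower t u ht hu0
      have hkey2 : m * (u / Real.sqrt t + (t - 1)) ≤ m * Real.sqrt (u ^ 2 + t ^ 2) :=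
        mul_le_mul_of_nonneg_left hkey hm.le
      have hbu : b * u = m * (u / Real.sqrt t) := by rw [hb]; field_simp
      nlinarith
    calc (u ^ 2 + t ^ 2) ^ (-(1/4) : ℝ) * exp (-m * sqrt (u ^ 2 + t ^ 2))
        ≤ (Real.sqrt t)⁻¹ * (Real.exp (-(m * (t-1))) * Real.exp (-b * u)) := by
          apply mul_le_mul h1 h2 (Real.exp_pos _).le (by positivity)
      _ = g u := by rw [hg]; ring
  have hnonneg : ∀ u ∈ Ioi a,
      0 ≤ (u ^ 2 + t ^ 2) ^ (-(1/4) : ℝ) * exp (-m * sqrt (u ^ 2 + t ^ 2)) := by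
    intro u hu; positivity
  have key : (∫ u in Ioi a, (u ^ 2 + t ^ 2) ^ (-(1/4) : ℝ) * exp (-m * sqrt (u ^ 2 + t ^ 2)))
      ≤ ∫ u in Ioi a, g u := by
    apply MeasureTheory.integral_mono_of_nonneg
    · filter_upwards [ae_restrict_mem measurableSet_Ioi] with u hu using hnonneg u hu
    · exact hgint
    · filter_upwards [ae_restrict_mem measurableSet_Ioi] with u hu using hmono u hu
  refine key.trans ?_
  have hgval : (∫ u in Ioi a, g u)
      = (Real.sqrt t)⁻¹ * Real.exp (-(m * (t - 1))) * (b⁻¹ * Real.exp (-(b * a))) := by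
    rw [hg, MeasureTheory.integral_const_mul]
    congr 1
    have h := integral_comp_mul_left_Ioi (fun x => Real.exp (-x)) a hb0
    simp only [smul_eq_mul] at h
    calc (∫ u in Ioi a, Real.exp (-b * u)) = ∫ u in Ioi a, Real.exp (-(b * u)) := by
          simp [neg_mul]
      _ = b⁻¹ * ∫ x in Ioi (b * a), Real.exp (-x) := h
      _ = b⁻¹ * Real.exp (-(b * a)) := by rw [integral_exp_neg_Ioi]
  rw [hgval]
  have hba : b * a = m * t ^ (α - 1/2) := by
    rw [hb, ha, Real.rpow_sub ht0, ← Real.sqrt_eq_rpow]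
    field_simp
  have hbinv : (Real.sqrt t)⁻¹ * b⁻¹ = m⁻¹ := by
    rw [hb]; field_simp
  have heq : (Real.sqrt t)⁻¹ * Real.exp (-(m * (t - 1))) * (b⁻¹ * Real.exp (-(b * a)))
      = (exp m / m) * exp (-m * t ^ (α - 1/2)) * exp (-m * t) := by
    rw [hba, show (-(m * (t - 1))) = m + -m * t by ring, Real.exp_add,
      show (-(m * t ^ (α - 1/2))) = -m * t ^ (α - 1/2) by ring]
    have hre : (Real.sqrt t)⁻¹ * (Real.exp m * Real.exp (-m * t)) *
          (b⁻¹ * Real.exp (-m * t ^ (α - 1/2)))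
        = ((Real.sqrt t)⁻¹ * b⁻¹) *
          (Real.exp m * Real.exp (-m * t) * Real.exp (-m * t ^ (α - 1/2))) := by ring
    rw [hre, hbinv]
    field_simp
  exact le_of_eq heq
end
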